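/- arXiv:1806.02399 — 7 statements merged into one kernel-verified Lean document; each statement's English description precedes it below -/
import Mathlib

section
/- For any tree T, the rank of the adjacency matrix of T equals twice the matching number of T. -/
open SimpleGraph Finset

def IsMatchingF {V : Type*} (G : SimpleGraph V) (M : Finset (Sym2 V)) : Prop :=
  (∀ e ∈ M, e ∈ G.edgeSet) ∧
  ∀ e ∈ M, ∀ f ∈ M, e ≠ f → ∀ v : V, ¬(v ∈ e ∧ v ∈ f)

noncomputable def matchNum {V : Type*} (G : SimpleGraph V) : ℕ :=
  sSup {k | ∃ M : Finset (Sym2 V), IsMatchingF G M ∧ M.card = k}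

section Aux

open Submodule Matrix

set_option linter.unusedSectionVars false
set_option linter.unusedVariables false

variable {V : Type*} [Fintype V] [DecidableEq V]

lemma zero_mem_matchSet (G : SimpleGraph V) :
    0 ∈ {k | ∃ M : Finset (Sym2 V), IsMatchingF G M ∧ M.card = k} :=
  ⟨∅, ⟨fun e he => absurd he (Finset.notMem_empty e),
    fun e he => absurd he (Finset.notMem_empty e)⟩, rfl⟩

lemma matchSet_bdd (G : SimpleGraph V) :
    BddAbove {k | ∃ M : Finset (Sym2 V), IsMatchingF G M ∧ M.card = k} :=
  ⟨Fintype.card (Sym2 V), fun k ⟨M, _, hc⟩ => hc ▸ M.card_le_univ⟩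

lemma exists_max_matching (G : SimpleGraph V) :
    ∃ M : Finset (Sym2 V), IsMatchingF G M ∧ M.card = matchNum G :=
  Nat.sSup_mem ⟨0, zero_mem_matchSet G⟩ (matchSet_bdd G)

lemma card_le_matchNum (G : SimpleGraph V) {M : Finset (Sym2 V)} (h : IsMatchingF G M) :
    M.card ≤ matchNum G :=
  le_csSup (matchSet_bdd G) ⟨M, h, rfl⟩

lemma matchNum_eq_zero (G : SimpleGraph V) (h : ∀ a b : V, ¬ G.Adj a b) : matchNum G = 0 := by
  have : {k | ∃ M : Finset (Sym2 V), IsMatchingF G M ∧ M.card = k} = {0} := by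
    ext k
    constructor
    · rintro ⟨M, hM, rfl⟩
      have : M = ∅ := by
        apply Finset.eq_empty_of_forall_notMem
        intro e he
        induction e with
        | h a b => exact h a b (hM.1 _ he)
      simp [this]
    · rintro rfl
      exact zero_mem_matchSet G
  rw [matchNum, this, csSup_singleton]

/-- Delete all edges incident to `u` or `v`. -/
def delPair {V : Type*} (G : SimpleGraph V) (u v : V) : SimpleGraph V where
  Adj x y := G.Adj x y ∧ x ≠ u ∧ x ≠ v ∧ y ≠ u ∧ y ≠ v
  symm := by constructor; intro x y ⟨h, h1, h2, h3, h4⟩; exact ⟨h.symm, h3, h4, h1, h2⟩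
  loopless := by constructor; intro x ⟨h, _⟩; exact G.irrefl h

instance (G : SimpleGraph V) [DecidableRel G.Adj] (u v : V) :
    DecidableRel (delPair G u v).Adj := fun x y => by
  unfold delPair; infer_instance

lemma delPair_edge {G : SimpleGraph V} {u v : V} {e : Sym2 V}
    (he : e ∈ (delPair G u v).edgeSet) : e ∈ G.edgeSet ∧ u ∉ e ∧ v ∉ e := by
  induction e with
  | h a b =>
    rw [mem_edgeSet] at he
    obtain ⟨h, h1, h2, h3, h4⟩ := he
    refine ⟨(G.mem_edgeSet).mpr h, ?_, ?_⟩ <;> rw [Sym2.mem_iff] <;> push_neg <;>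
      exact ⟨fun hh => by simp_all, fun hh => by simp_all⟩

lemma matchNum_delPair (G : SimpleGraph V) {u v : V} (huv : G.Adj u v)
    (hleaf : ∀ w, G.Adj v w → w = u) :
    matchNum G = matchNum (delPair G u v) + 1 := by
  have hne : u ≠ v := huv.ne'.symm
  apply le_antisymm
  · obtain ⟨M, hM, hcard⟩ := exists_max_matching G
    rw [← hcard]
    classical
    set M' := M.filter (fun e => u ∉ e ∧ v ∉ e) with hM'def
    have key : ∀ g ∈ M, u ∈ g ∨ v ∈ g → u ∈ g := by
      intro g hg hgv
      rcases hgv with h | h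
      · exact h
      · have hgE := hM.1 g hg
        induction g with
        | h a b =>
          rw [mem_edgeSet] at hgE
          rw [Sym2.mem_iff] at h
          rcases h with rfl | rfl
          · have := hleaf b hgE
            rw [Sym2.mem_iff]; right; exact this.symm
          · have := hleaf a hgE.symm
            rw [Sym2.mem_iff]; left; exact this.symm
    have hM'm : IsMatchingF (delPair G u v) M' := by
      constructor
      · intro e he
        rw [hM'def, Finset.mem_filter] at he
        obtain ⟨heM, hu, hv⟩ := he
        have heE := hM.1 e heM
        induction e with
        | h a b =>
          rw [mem_edgeSet] at heE ⊢
          rw [Sym2.mem_iff] at hu hv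
          push_neg at hu hv
          exact ⟨heE, Ne.symm hu.1, Ne.symm hv.1, Ne.symm hu.2, Ne.symm hv.2⟩
      · intro e he f hf hef w
        exact hM.2 e (Finset.mem_filter.mp he).1 f (Finset.mem_filter.mp hf).1 hef w
    have h1 : (M.filter (fun e => ¬(u ∉ e ∧ v ∉ e))).card ≤ 1 := by
      rw [Finset.card_le_one]
      intro e he f hf
      rw [Finset.mem_filter] at he hf
      have hue : u ∈ e := key e he.1 (by push_neg at he; tauto)
      have huf : u ∈ f := key f hf.1 (by push_neg at hf; tauto)
      by_contra hef
      exact hM.2 e he.1 f hf.1 hef u ⟨hue, huf⟩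
    have h2 : M'.card + (M.filter (fun e => ¬(u ∉ e ∧ v ∉ e))).card = M.card :=
      Finset.card_filter_add_card_filter_not _
    have := card_le_matchNum (delPair G u v) hM'm
    omega
  · obtain ⟨M', hM', hcard⟩ := exists_max_matching (delPair G u v)
    have havoid : ∀ e ∈ M', u ∉ e ∧ v ∉ e := fun e he => (delPair_edge (hM'.1 e he)).2
    have hnm : s(u, v) ∉ M' := fun h => (havoid _ h).1 (Sym2.mem_mk_left u v)
    have hmm : IsMatchingF G (insert s(u, v) M') := by
      constructor
      · intro e he
        rcases Finset.mem_insert.mp he with rfl | he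
        · exact (G.mem_edgeSet).mpr huv
        · exact (delPair_edge (hM'.1 e he)).1
      · intro e he f hf hef w hw
        rcases Finset.mem_insert.mp he with rfl | he <;>
          rcases Finset.mem_insert.mp hf with rfl | hf
        · exact hef rfl
        · have := havoid f hf
          rcases Sym2.mem_iff.mp hw.1 with rfl | rfl
          · exact this.1 hw.2
          · exact this.2 hw.2
        · have := havoid e he
          rcases Sym2.mem_iff.mp hw.2 with rfl | rfl
          · exact this.1 hw.1
          · exact this.2 hw.1
        · exact hM'.2 e he f hf hef w hw
    have := card_le_matchNum G hmm
    rw [Finset.card_insert_of_notMem hnm, hcard] at this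
    exact this

lemma rank_step (A B : Matrix V V ℚ) (u v : V) (huv : u ≠ v)
    (hcol : ∀ w, A w v = if w = u then 1 else 0)
    (hrow : ∀ w, A v w = if w = u then 1 else 0)
    (huu : A u u = 0)
    (hB : ∀ x y, B x y = if x = u ∨ x = v ∨ y = u ∨ y = v then 0 else A x y) :
    A.rank = B.rank + 2 := by
  classical
  set eu : V → ℚ := fun x => if x = u then 1 else 0 with heu
  set cu : V → ℚ := fun x => A x u with hcu
  set S : Submodule ℚ (V → ℚ) := span ℚ (Set.range Aᵀ) with hS
  set S' : Submodule ℚ (V → ℚ) := span ℚ (Set.range Bᵀ) with hS'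
  set P : Submodule ℚ (V → ℚ) := span ℚ {eu, cu} with hP
  have hAv : Aᵀ v = eu := by funext x; simp [Matrix.transpose_apply, hcol x, heu]
  have hAu : Aᵀ u = cu := by funext x; simp [Matrix.transpose_apply, hcu]
  have hBcol : ∀ w, w ≠ u → w ≠ v → Bᵀ w = Aᵀ w - (A u w) • eu := by
    intro w hwu hwv
    funext x
    simp only [Matrix.transpose_apply, Pi.sub_apply, Pi.smul_apply, smul_eq_mul, hB, heu]
    by_cases hxu : x = u
    · subst hxu; simp [hwu.symm ∘ Eq.symm, hwv, hwu]
    · by_cases hxv : x = v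
      · subst hxv; simp [hrow w, hwu, hxu, hwv]
      · simp [hxu, hxv, hwu, hwv]
  have hBzero : ∀ w, w = u ∨ w = v → Bᵀ w = 0 := by
    intro w hw
    funext x
    simp only [Matrix.transpose_apply, hB]
    rcases hw with rfl | rfl <;> simp
  have hsup : S = S' ⊔ P := by
    apply le_antisymm
    · rw [hS, span_le]
      rintro _ ⟨w, rfl⟩
      by_cases hwv : w = v
      · subst hwv; rw [hAv]
        exact le_sup_right (α := Submodule ℚ (V → ℚ)) (subset_span (by simp))
      by_cases hwu : w = u
      · subst hwu; rw [hAu]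
        exact le_sup_right (α := Submodule ℚ (V → ℚ)) (subset_span (by simp))
      have : Aᵀ w = Bᵀ w + (A u w) • eu := by rw [hBcol w hwu hwv]; abel
      rw [this]
      exact add_mem (le_sup_left (α := Submodule ℚ (V → ℚ))
          (subset_span ⟨w, rfl⟩))
        (smul_mem _ _ (le_sup_right (α := Submodule ℚ (V → ℚ)) (subset_span (by simp))))
    · apply sup_le
      · rw [hS', span_le]
        rintro _ ⟨w, rfl⟩
        by_cases hwu : w = u
        · rw [hBzero w (Or.inl hwu)]; exact zero_mem _
        by_cases hwv : w = v
        · rw [hBzero w (Or.inr hwv)]; exact zero_mem _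
        rw [hBcol w hwu hwv]
        exact sub_mem (subset_span ⟨w, rfl⟩) (smul_mem _ _ (hAv ▸ subset_span ⟨v, rfl⟩))
      · rw [hP, span_le]
        rintro x hx
        rcases hx with rfl | rfl
        · exact hAv ▸ subset_span ⟨v, rfl⟩
        · exact hAu ▸ subset_span ⟨u, rfl⟩
  have hSK : ∀ f ∈ S', f u = 0 ∧ f v = 0 := by
    intro f hf
    have : S' ≤ (LinearMap.ker (LinearMap.proj (R := ℚ) (φ := fun _ : V => ℚ) u)) ⊓
        (LinearMap.ker (LinearMap.proj (R := ℚ) (φ := fun _ : V => ℚ) v)) := by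
      rw [hS', span_le]
      rintro _ ⟨w, rfl⟩
      simp only [Set.mem_inter_iff, SetLike.mem_coe, Submodule.mem_inf, LinearMap.mem_ker,
        LinearMap.proj_apply, Matrix.transpose_apply]
      constructor <;> simp [hB]
    exact (Submodule.mem_inf.mp (this hf)).imp id id
  have hvals : cu u = 0 ∧ cu v = 1 ∧ eu u = 1 ∧ eu v = 0 := by
    refine ⟨huu, ?_, by simp [heu], by simp [heu, huv.symm]⟩
    simp [hcu, hrow u]
  have hinf : S' ⊓ P = ⊥ := by
    rw [eq_bot_iff]
    rintro f ⟨hf1, hf2⟩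
    obtain ⟨a, b, hab⟩ := Submodule.mem_span_pair.mp hf2
    obtain ⟨hu0, hv0⟩ := hSK f hf1
    have h1 : a = 0 := by
      have := congrFun hab u
      simp only [Pi.add_apply, Pi.smul_apply, smul_eq_mul] at this
      rw [hvals.2.2.1, hvals.1] at this
      simpa [hu0] using this
    have h2 : b = 0 := by
      have := congrFun hab v
      simp only [Pi.add_apply, Pi.smul_apply, smul_eq_mul] at this
      rw [hvals.2.2.2, hvals.2.1] at this
      simpa [hv0] using this
    rw [Submodule.mem_bot, ← hab, h1, h2]
    simp
  have hli : LinearIndependent ℚ ![eu, cu] := by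
    rw [LinearIndependent.pair_iff]
    intro s t hst
    have h1 := congrFun hst u
    have h2 := congrFun hst v
    simp only [Pi.add_apply, Pi.smul_apply, smul_eq_mul, Pi.zero_apply] at h1 h2
    rw [hvals.2.2.1, hvals.1] at h1
    rw [hvals.2.2.2, hvals.2.1] at h2
    constructor <;> linarith
  have hPrank : Module.finrank ℚ P = 2 := by
    have hrange : ({eu, cu} : Set (V → ℚ)) = Set.range ![eu, cu] := by
      simp [Matrix.range_cons, Matrix.range_empty, Set.pair_comm]
    rw [hP, hrange, finrank_span_eq_card hli]
    simp
  have := Submodule.finrank_sup_add_finrank_inf_eq S' P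
  rw [hinf, finrank_bot, hPrank] at this
  rw [Matrix.rank_eq_finrank_span_cols, Matrix.rank_eq_finrank_span_cols]
  show Module.finrank ℚ (span ℚ (Set.range Aᵀ)) = Module.finrank ℚ (span ℚ (Set.range Bᵀ)) + 2
  rw [← hS, ← hS', hsup]
  omega

lemma exists_leaf (G : SimpleGraph V) (hG : G.IsAcyclic) {a b : V} (hab : G.Adj a b) :
    ∃ u v, G.Adj u v ∧ ∀ w, G.Adj v w → w = u := by
  classical
  set N : Set ℕ := {n | ∃ (x y : V) (p : G.Walk x y), p.IsPath ∧ p.length = n} with hN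
  have hbdd : BddAbove N := by
    refine ⟨Fintype.card V, ?_⟩
    rintro n ⟨x, y, p, hp, rfl⟩
    exact (hp.length_lt).le
  have h1N : 1 ∈ N := by
    refine ⟨a, b, Walk.cons hab Walk.nil, ?_, rfl⟩
    rw [Walk.cons_isPath_iff]
    exact ⟨Walk.IsPath.nil, by simp [hab.ne]⟩
  obtain ⟨x, y, p, hp, hlen⟩ : ∃ (x y : V) (p : G.Walk x y), p.IsPath ∧ p.length = sSup N :=
    Nat.sSup_mem ⟨1, h1N⟩ hbdd
  have h1 : 1 ≤ sSup N := le_csSup hbdd h1N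
  cases p with
  | nil => simp at hlen; omega
  | @cons _ s _ h q =>
    refine ⟨s, x, h.symm, ?_⟩
    intro w hxw
    by_cases hw : w ∈ (Walk.cons h q).support
    · have hne : w ≠ x := hxw.ne'
      set p1 : G.Walk x w := Walk.cons hxw Walk.nil with hp1
      have hp1path : p1.IsPath := by
        rw [hp1, Walk.cons_isPath_iff]
        exact ⟨Walk.IsPath.nil, by simp [hxw.ne]⟩
      set p2 : G.Walk x w := (Walk.cons h q).takeUntil w hw with hp2
      have hp2path : p2.IsPath := hp.takeUntil hw
      have heq : p1 = p2 := by
        have := hG.path_unique ⟨p1, hp1path⟩ ⟨p2, hp2path⟩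
        exact congrArg Subtype.val this
      have hspec := ((Walk.cons h q).take_spec hw)
      rw [← hp2, ← heq, hp1] at hspec
      rw [Walk.cons_append, Walk.nil_append] at hspec
      have := congrArg (fun (r : G.Walk x y) => r.getVert 1) hspec
      simpa [Walk.getVert_cons_succ] using this
    · have hplus : (1 + sSup N) ∈ N := by
        refine ⟨w, y, Walk.cons hxw.symm (Walk.cons h q), ?_, by simp [hlen]; omega⟩
        rw [Walk.cons_isPath_iff]
        exact ⟨hp, hw⟩
      have := le_csSup hbdd hplus
      omega

lemma forest_rank (n : ℕ) (G : SimpleGraph V) [DecidableRel G.Adj]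
    (hG : G.IsAcyclic) (hcard : G.edgeFinset.card ≤ n) :
    (G.adjMatrix ℚ).rank = 2 * matchNum G := by
  induction n generalizing G with
  | zero =>
    have hno : ∀ a b : V, ¬ G.Adj a b := by
      intro a b hab
      have : s(a, b) ∈ G.edgeFinset := by
        rw [mem_edgeFinset]; exact (G.mem_edgeSet).mpr hab
      have := Finset.card_pos.mpr ⟨_, this⟩
      omega
    have hA : G.adjMatrix ℚ = 0 := by
      ext a b
      simp [adjMatrix_apply, hno a b]
    rw [hA, Matrix.rank_zero, matchNum_eq_zero G hno]
  | succ n ih =>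
    by_cases hE : ∃ a b, G.Adj a b
    · obtain ⟨a, b, hab⟩ := hE
      obtain ⟨u, v, huv, hleaf⟩ := exists_leaf G hG hab
      have hadj_iff : ∀ w, G.Adj w v ↔ w = u := by
        intro w
        constructor
        · intro h; exact hleaf w h.symm
        · rintro rfl; exact huv
      set G' := delPair G u v with hG'
      have hG'le : G' ≤ G := fun x y h => h.1
      have hG'ac : G'.IsAcyclic := fun z c hc => hG (c.mapLe hG'le) (hc.mapLe hG'le)
      have hG'card : G'.edgeFinset.card ≤ n := by
        have hsub : G'.edgeFinset ⊆ G.edgeFinset.erase s(u, v) := by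
          intro e he
          rw [mem_edgeFinset] at he
          obtain ⟨heG, hu, _⟩ := delPair_edge he
          rw [Finset.mem_erase, mem_edgeFinset]
          exact ⟨fun h => hu (h ▸ Sym2.mem_mk_left u v), heG⟩
        have hmem : s(u, v) ∈ G.edgeFinset := by
          rw [mem_edgeFinset]; exact (G.mem_edgeSet).mpr huv
        have := Finset.card_le_card hsub
        rw [Finset.card_erase_of_mem hmem] at this
        omega
      have hrank : (G.adjMatrix ℚ).rank = (G'.adjMatrix ℚ).rank + 2 := by
        apply rank_step _ _ u v (huv.ne'.symm)
        · intro w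
          by_cases hwu : w = u
          · subst hwu; simp [adjMatrix_apply, huv]
          · simp only [adjMatrix_apply]
            rw [if_neg (fun h => hwu (hleaf w h.symm)), if_neg hwu]
        · intro w
          by_cases hwu : w = u
          · subst hwu; simp [adjMatrix_apply, huv.symm]
          · simp only [adjMatrix_apply]
            rw [if_neg (fun h => hwu (hleaf w h)), if_neg hwu]
        · simp [adjMatrix_apply]
        · intro x y
          by_cases hc : x = u ∨ x = v ∨ y = u ∨ y = v
          · have : ¬ G'.Adj x y := by
              rw [hG']
              rintro ⟨_, h1, h2, h3, h4⟩
              tauto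
            simp [adjMatrix_apply, this, hc]
          · push_neg at hc
            have : G'.Adj x y ↔ G.Adj x y := by
              rw [hG']
              exact ⟨fun h => h.1, fun h => ⟨h, hc.1, hc.2.1, hc.2.2.1, hc.2.2.2⟩⟩
            simp [adjMatrix_apply, this, hc]
      rw [hrank, ih G' hG'ac hG'card, matchNum_delPair G huv hleaf]
      ring
    · push_neg at hE
      have hA : G.adjMatrix ℚ = 0 := by
        ext a b
        simp [adjMatrix_apply, hE a b]
      rw [hA, Matrix.rank_zero, matchNum_eq_zero G hE]

end Aux

theorem tree_rank_eq_two_mul_matchNum {V : Type*} [Fintype V] [DecidableEq V]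
    (G : SimpleGraph V) [DecidableRel G.Adj] (hT : G.IsTree) :
    (G.adjMatrix ℚ).rank = 2 * matchNum G :=
  forest_rank G.edgeFinset.card G hT.IsAcyclic le_rfl
end

section
/- The rank of the adjacency matrix of any tree is even. -/
open SimpleGraph

/-- Functions out of a sum type are linearly equivalent to the product. -/
def sumFunLequiv (R m n : Type*) [Semiring R] :
    ((m ⊕ n) → R) ≃ₗ[R] (m → R) × (n → R) :=
  { Equiv.sumArrowEquivProdArrow m n R with
    map_add' := fun _ _ => rfl
    map_smul' := fun _ _ => rfl }

/-- A product of submodules is linearly equivalent to the product of the submodules. -/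
def submoduleProdEquiv {R M N : Type*} [Semiring R] [AddCommMonoid M] [AddCommMonoid N]
    [Module R M] [Module R N] (p : Submodule R M) (q : Submodule R N) :
    (p.prod q) ≃ₗ[R] p × q where
  toFun x := (⟨x.1.1, (Submodule.mem_prod.mp x.2).1⟩, ⟨x.1.2, (Submodule.mem_prod.mp x.2).2⟩)
  invFun x := ⟨(x.1.1, x.2.1), Submodule.mem_prod.mpr ⟨x.1.2, x.2.2⟩⟩
  left_inv _ := rfl
  right_inv _ := rfl
  map_add' _ _ := rfl
  map_smul' _ _ := rfl

lemma range_prodMap' {R M N M' N' : Type*} [CommRing R] [AddCommGroup M] [AddCommGroup N]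
    [AddCommGroup M'] [AddCommGroup N'] [Module R M] [Module R N] [Module R M'] [Module R N']
    (f : M →ₗ[R] M') (g : N →ₗ[R] N') :
    LinearMap.range (f.prodMap g) = (LinearMap.range f).prod (LinearMap.range g) := by
  ext x
  simp only [LinearMap.mem_range, Submodule.mem_prod, LinearMap.prodMap_apply, Prod.ext_iff]
  constructor
  · rintro ⟨y, hy1, hy2⟩
    exact ⟨⟨y.1, hy1⟩, ⟨y.2, hy2⟩⟩
  · rintro ⟨⟨a, ha⟩, ⟨b, hb⟩⟩
    exact ⟨(a, b), ha, hb⟩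

lemma rank_fromBlocks_antidiag {m n : Type*} [Fintype m] [Fintype n] [DecidableEq m]
    [DecidableEq n] (B : Matrix m n ℚ) (C : Matrix n m ℚ) :
    (Matrix.fromBlocks 0 B C 0).rank = B.rank + C.rank := by
  classical
  set e1 : ((m ⊕ n) → ℚ) ≃ₗ[ℚ] (m → ℚ) × (n → ℚ) := sumFunLequiv ℚ m n with he1
  have hcomp : (Matrix.fromBlocks (0 : Matrix m m ℚ) B C 0).mulVecLin
      = e1.symm.toLinearMap ∘ₗ ((B.mulVecLin.prodMap C.mulVecLin) ∘ₗ
        ((LinearEquiv.prodComm ℚ (m → ℚ) (n → ℚ)).toLinearMap ∘ₗ e1.toLinearMap)) := by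
    apply LinearMap.ext; intro f
    simp only [Matrix.mulVecLin_apply, Matrix.fromBlocks_mulVec, Matrix.zero_mulVec,
      zero_add, add_zero, LinearMap.comp_apply, LinearEquiv.coe_coe]
    rfl
  rw [Matrix.rank, Matrix.rank, Matrix.rank, hcomp]
  rw [LinearMap.range_comp, LinearMap.range_comp_of_range_eq_top]
  · rw [LinearEquiv.finrank_map_eq, range_prodMap']
    rw [(submoduleProdEquiv _ _).finrank_eq, Module.finrank_prod]
  · rw [LinearMap.range_comp, LinearEquiv.range, Submodule.map_top, LinearEquiv.range]

lemma tree_path_length_adj {V : Type*} [DecidableEq V] {G : SimpleGraph V} (hT : G.IsTree) {root : V}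
    (f : ∀ v, G.Walk root v) (hf : ∀ v, (f v).IsPath)
    (hf' : ∀ v (y : G.Walk root v), y.IsPath → y = f v)
    {v w : V} (h : G.Adj v w) :
    (f w).length = (f v).length + 1 ∨ (f v).length = (f w).length + 1 := by
  by_cases hmem : w ∈ (f v).support
  · right
    have hq := (hf v).takeUntil hmem
    have hr := (hf v).dropUntil hmem
    have hone : (Walk.cons h.symm Walk.nil : G.Walk w v).IsPath := by
      simp [Walk.isPath_def, h.ne']
    have huniq := hT.IsAcyclic.path_unique ⟨(f v).dropUntil w hmem, hr⟩ ⟨.cons h.symm .nil, hone⟩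
    have hr1 : ((f v).dropUntil w hmem).length = 1 := by
      have := congrArg (fun p : G.Path w v => p.1.length) huniq
      simpa using this
    have hlen := congrArg Walk.length ((f v).take_spec hmem)
    rw [Walk.length_append] at hlen
    have hfw : (f w).length = ((f v).takeUntil w hmem).length := by
      rw [← hf' w _ hq]
    omega
  · left
    have hp' : ((f v).concat h).IsPath := by
      rw [Walk.concat_eq_append, Walk.isPath_def, Walk.support_append]
      simp only [Walk.support_cons, Walk.support_nil, List.tail_cons]
      rw [List.nodup_append]
      exact ⟨(hf v).support_nodup, List.nodup_singleton w, by
        intro a ha b hb hab; simp at hb; subst hb; subst hab; exact hmem ha⟩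
    have := hf' w _ hp'
    have hl : ((f v).concat h).length = (f v).length + 1 := Walk.length_concat _ _
    rw [← this, hl]

theorem tree_rank_even {V : Type*} [Fintype V] [DecidableEq V]
    (G : SimpleGraph V) [DecidableRel G.Adj] (hT : G.IsTree) :
    Even (G.adjMatrix ℚ).rank := by
  classical
  obtain ⟨root⟩ := hT.isConnected.nonempty
  choose f hf hf' using fun v => hT.existsUnique_path root v
  have key : ∀ {v w : V}, G.Adj v w →
      ¬(Even (f v).length ↔ Even (f w).length) := by
    intro v w h
    rcases tree_path_length_adj hT f hf (fun v y hy => hf' v y hy) h with h1 | h1 <;>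
      rw [h1, Nat.even_add_one] <;> tauto
  set P : V → Prop := fun v => Even (f v).length with hP
  set e : {v // P v} ⊕ {v // ¬P v} ≃ V := Equiv.sumCompl P with he
  set A := G.adjMatrix ℚ with hA
  set B : Matrix {v // P v} {v // ¬P v} ℚ := Matrix.of (fun i j => A i.1 j.1) with hB
  have hblocks : A.submatrix ⇑e ⇑e = Matrix.fromBlocks 0 B B.transpose 0 := by
    ext i j
    rcases i with i | i <;> rcases j with j | j <;>
      simp only [Matrix.submatrix_apply, he, Equiv.sumCompl_apply_inl, Equiv.sumCompl_apply_inr,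
        Matrix.fromBlocks_apply₁₁, Matrix.fromBlocks_apply₁₂, Matrix.fromBlocks_apply₂₁,
        Matrix.fromBlocks_apply₂₂, Matrix.zero_apply, hB, Matrix.of_apply, Matrix.transpose_apply]
    · -- both even: not adjacent
      simp only [hA, SimpleGraph.adjMatrix_apply]
      rw [if_neg]
      intro hadj
      exact key hadj (iff_of_true i.2 j.2)
    · -- Bᵀ block
      simp only [hA, SimpleGraph.adjMatrix_apply]
      by_cases hadj : G.Adj ↑i ↑j
      · rw [if_pos hadj, if_pos hadj.symm]
      · rw [if_neg hadj, if_neg (fun hc => hadj hc.symm)]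
    · -- both odd: not adjacent
      simp only [hA, SimpleGraph.adjMatrix_apply]
      rw [if_neg]
      intro hadj
      exact key hadj (iff_of_false i.2 j.2)
  have hrank : A.rank = (A.submatrix ⇑e ⇑e).rank := (Matrix.rank_submatrix A e e).symm
  rw [hrank, hblocks, rank_fromBlocks_antidiag, Matrix.rank_transpose]
  exact ⟨B.rank, (two_mul B.rank).symm ▸ (two_mul B.rank)⟩
end

section
/- Let T be a tree of order n > 2 with l leaves. If M is a matching in T, then |M| ≤ n - l. -/
open SimpleGraph Finset

private lemma walk_trap {V : Type*} {G : SimpleGraph V} {a b : V}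
    (ha : ∀ c, G.Adj a c → c = b) (hb : ∀ c, G.Adj b c → c = a) :
    ∀ u x : V, G.Walk u x → (u = a ∨ u = b) → (x = a ∨ x = b) := by
  intro u x w
  induction w with
  | nil => exact id
  | cons h p ih =>
    rename_i v' _
    rintro (rfl | rfl)
    · exact ih (Or.inr (ha _ h))
    · exact ih (Or.inl (hb _ h))

private lemma edge_has_nonleaf {V : Type*} [Fintype V] [DecidableEq V]
    (G : SimpleGraph V) [DecidableRel G.Adj] (hT : G.IsTree)
    (hn : 2 < Fintype.card V) {e : Sym2 V} (he : e ∈ G.edgeSet) :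
    ∃ v, v ∈ e ∧ G.degree v ≠ 1 := by
  induction e with
  | _ a b =>
    have hab : G.Adj a b := he
    by_contra hcon
    push_neg at hcon
    have hda : G.degree a = 1 := by
      have := hcon a (Sym2.mem_mk_left a b); simpa using this
    have hdb : G.degree b = 1 := by
      have := hcon b (Sym2.mem_mk_right a b); simpa using this
    have ha : ∀ c, G.Adj a c → c = b := by
      intro c hc
      have h1 : (G.neighborFinset a).card ≤ 1 := by
        rw [← G.card_neighborFinset_eq_degree] at hda; omega
      exact Finset.card_le_one.mp h1 c (by simpa using hc) b (by simpa using hab)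
    have hb : ∀ c, G.Adj b c → c = a := by
      intro c hc
      have h1 : (G.neighborFinset b).card ≤ 1 := by
        rw [← G.card_neighborFinset_eq_degree] at hdb; omega
      exact Finset.card_le_one.mp h1 c (by simpa using hc) a (by simpa using hab.symm)
    have hall : ∀ x : V, x = a ∨ x = b := by
      intro x
      obtain ⟨w⟩ := hT.isConnected.preconnected a x
      exact walk_trap ha hb a x w (Or.inl rfl)
    have : (Finset.univ : Finset V) ⊆ {a, b} := by
      intro x _
      rcases hall x with rfl | rfl <;> simp
    have := Finset.card_le_card this
    simp only [Finset.card_univ] at this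
    have h2 : ({a, b} : Finset V).card ≤ 2 := Finset.card_insert_le _ _ |>.trans (by simp)
    omega

theorem tree_matching_le_internal {V : Type*} [Fintype V] [DecidableEq V]
    (G : SimpleGraph V) [DecidableRel G.Adj] (hT : G.IsTree)
    (hn : 2 < Fintype.card V)
    (M : Finset (Sym2 V)) (hM : IsMatchingF G M) :
    M.card ≤ Fintype.card V - (Finset.univ.filter fun v => G.degree v = 1).card := by
  classical
  have hne : Nonempty V := Fintype.card_pos_iff.mp (by omega)
  have key : ∀ e ∈ M, ∃ v, v ∈ e ∧ G.degree v ≠ 1 := fun e he =>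
    edge_has_nonleaf G hT hn (hM.1 e he)
  choose f hf1 hf2 using key
  have hcard : M.card ≤ (Finset.univ.filter fun v => ¬ G.degree v = 1).card := by
    apply Finset.card_le_card_of_injOn (fun e => if h : e ∈ M then f e h else Classical.arbitrary V)
    · intro e he
      simp only [Finset.mem_coe] at he
      simp only [he, dif_pos, Finset.mem_coe, Finset.mem_filter, Finset.mem_univ, true_and]
      exact hf2 e he
    · intro e he e' he' hfe
      simp only [Finset.mem_coe] at he he'
      simp only [he, he', dif_pos] at hfe
      by_contra hne
      exact hM.2 e he e' he' hne (f e he) ⟨hf1 e he, hfe ▸ hf1 e' he'⟩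
  have hsplit := Finset.card_filter_add_card_filter_not
    (s := (Finset.univ : Finset V)) (p := fun v => G.degree v = 1)
  simp only [Finset.card_univ] at hsplit
  omega
end

section
/- For any graph G, the independence number of G is at most its annihilation number: α(G) ≤ a(G). -/
open SimpleGraph Finset

noncomputable def indepNum {V : Type*} [Fintype V] (G : SimpleGraph V) : ℕ :=
  sSup {k | ∃ S : Finset V, (∀ v ∈ S, ∀ w ∈ S, ¬ G.Adj v w) ∧ S.card = k}

noncomputable def annNumG {V : Type*} [Fintype V] [DecidableEq V]
    (G : SimpleGraph V) [DecidableRel G.Adj] : ℕ :=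
  sSup {a | ∃ A : Finset V, A.card = a ∧ (∑ v ∈ A, G.degree v) ≤ G.edgeFinset.card}

lemma indep_degree_sum {V : Type*} [Fintype V] [DecidableEq V]
    (G : SimpleGraph V) [DecidableRel G.Adj] (S : Finset V)
    (hS : ∀ v ∈ S, ∀ w ∈ S, ¬ G.Adj v w) :
    (∑ v ∈ S, G.degree v) ≤ G.edgeFinset.card := by
  have hdisj : (S : Set V).PairwiseDisjoint (fun v => G.incidenceFinset v) := by
    intro v hv w hw hvw
    simp only [Finset.disjoint_left]
    intro e hev hew
    rw [mem_incidenceFinset] at hev hew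
    have : e = s(v, w) := (Sym2.mem_and_mem_iff hvw).1 ⟨hev.2, hew.2⟩
    subst this
    exact hS v hv w hw ((G.mem_edgeSet).1 hev.1)
  calc (∑ v ∈ S, G.degree v) = ∑ v ∈ S, (G.incidenceFinset v).card := by
        simp [card_incidenceFinset_eq_degree]
    _ = (S.disjiUnion (fun v => G.incidenceFinset v) hdisj).card := by
        rw [Finset.card_disjiUnion]
    _ ≤ G.edgeFinset.card := by
        apply Finset.card_le_card
        intro e he
        rw [Finset.mem_disjiUnion] at he
        obtain ⟨v, _, hev⟩ := he
        rw [mem_incidenceFinset] at hev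
        exact mem_edgeFinset.2 hev.1

theorem indepNum_le_annNum {V : Type*} [Fintype V] [DecidableEq V]
    (G : SimpleGraph V) [DecidableRel G.Adj] :
    _root_.indepNum G ≤ annNumG G := by
  apply csSup_le_csSup
  · refine ⟨Fintype.card V, ?_⟩
    rintro k ⟨A, hA, -⟩
    exact hA ▸ Finset.card_le_card (Finset.subset_univ A)
  · exact ⟨0, ∅, by simp⟩
  · rintro k ⟨S, hS, hcard⟩
    exact ⟨S, hcard, indep_degree_sum G S hS⟩
end

section
/- If G is a bipartite graph of order n, then the matching number of G satisfies ν(G) ≥ n - a(G), where a(G) is the annihilation number of G. -/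
open SimpleGraph Finset

lemma indep_deg_sum {V : Type*} [Fintype V] [DecidableEq V] (G : SimpleGraph V) [DecidableRel G.Adj]
    (A : Finset V) (hA : ∀ v ∈ A, ∀ w ∈ A, ¬ G.Adj v w) :
    (∑ v ∈ A, G.degree v) ≤ G.edgeFinset.card := by
  classical
  have hsum : ∑ v ∈ A, G.degree v = (A.biUnion (fun v => G.incidenceFinset v)).card := by
    rw [Finset.card_biUnion]
    · exact Finset.sum_congr rfl fun v _ => (G.card_incidenceFinset_eq_degree v).symm
    · intro u hu v hv huv
      rw [Function.onFun, Finset.disjoint_left]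
      intro e heu hev
      rw [SimpleGraph.mem_incidenceFinset, SimpleGraph.incidenceSet] at heu hev
      obtain ⟨he, hue⟩ := heu
      obtain ⟨_, hve⟩ := hev
      induction e with
      | h a b =>
        have : G.Adj a b := he
        rcases Sym2.mem_iff.1 hue with rfl | rfl <;>
        rcases Sym2.mem_iff.1 hve with rfl | rfl
        · exact huv rfl
        · exact hA u hu v hv this
        · exact hA v hv u hu this
        · exact huv rfl
  rw [hsum]
  apply Finset.card_le_card
  intro e he
  rw [Finset.mem_biUnion] at he
  obtain ⟨v, _, hev⟩ := he
  rw [SimpleGraph.mem_incidenceFinset] at hev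
  exact SimpleGraph.mem_edgeFinset.2 hev.1

theorem bipartite_matchNum_ge {V : Type*} [Fintype V] [DecidableEq V]
    (G : SimpleGraph V) [DecidableRel G.Adj] (hB : G.Colorable 2) :
    Fintype.card V - annNumG G ≤ matchNum G := by
  classical
  obtain ⟨c⟩ := hB
  have fin2 : ∀ a b : Fin 2, a ≠ b → (a = 0 ∧ b = 1) ∨ (a = 1 ∧ b = 0) := by decide
  set X : Finset V := Finset.univ.filter (fun v => c v = 0) with hXdef
  set Y : Finset V := Finset.univ.filter (fun v => ¬ c v = 0) with hYdef
  have hmemX : ∀ v, v ∈ X ↔ c v = 0 := by intro v; simp [hXdef]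
  have hmemY : ∀ v, v ∈ Y ↔ c v = 1 := by
    intro v; simp only [hYdef, Finset.mem_filter, Finset.mem_univ, true_and]
    constructor
    · intro h; omega
    · intro h; omega
  have hcardXY : X.card + Y.card = Fintype.card V := by
    rw [hXdef, hYdef, Finset.card_filter_add_card_filter_not]
    exact (Finset.card_univ)
  have hadjXY : ∀ {u v}, G.Adj u v → u ∈ X → v ∈ Y := by
    intro u v huv hu
    rcases fin2 _ _ (c.valid huv) with ⟨h1, h2⟩ | ⟨h1, h2⟩
    · exact (hmemY v).2 h2
    · exact absurd ((hmemX u).1 hu) (by rw [h1]; decide)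
  set N : Finset V → Finset V := fun S => S.biUnion (fun v => G.neighborFinset v) with hNdef
  have hNY : ∀ S ⊆ X, N S ⊆ Y := by
    intro S hS y hy
    rw [hNdef, Finset.mem_biUnion] at hy
    obtain ⟨v, hvS, hyv⟩ := hy
    exact hadjXY ((SimpleGraph.mem_neighborFinset _ _ _).1 hyv) (hS hvS)
  obtain ⟨S₁, hS₁mem, hS₁max⟩ := Finset.exists_max_image X.powerset
    (fun S => S.card - (N S).card) ⟨∅, Finset.empty_mem_powerset X⟩
  obtain ⟨S₀, hS₀X, hts, hmax⟩ :
      ∃ S₀, S₀ ⊆ X ∧ (N S₀).card ≤ S₀.card ∧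
        ∀ S ⊆ X, S.card - (N S).card ≤ S₀.card - (N S₀).card := by
    by_cases h : (N S₁).card ≤ S₁.card
    · exact ⟨S₁, Finset.mem_powerset.1 hS₁mem, h,
        fun S hS => hS₁max S (Finset.mem_powerset.2 hS)⟩
    · have hN0 : (N ∅).card = 0 := by simp [hNdef]
      refine ⟨∅, Finset.empty_subset X, by simp [hN0], ?_⟩
      intro S hS
      have h2 := hS₁max S (Finset.mem_powerset.2 hS)
      simp only [Finset.card_empty, hN0]
      omega
  set d : ℕ := S₀.card - (N S₀).card with hddef
  -- annihilation side
  set A : Finset V := S₀ ∪ (Y \ N S₀) with hAdef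
  have hAindep : ∀ v ∈ A, ∀ w ∈ A, ¬ G.Adj v w := by
    intro v hv w hw hadj
    rw [hAdef, Finset.mem_union] at hv hw
    rcases hv with hv | hv <;> rcases hw with hw | hw
    · exact c.valid hadj (((hmemX v).1 (hS₀X hv)).trans ((hmemX w).1 (hS₀X hw)).symm)
    · have hwN : w ∈ N S₀ := by
        rw [hNdef, Finset.mem_biUnion]
        exact ⟨v, hv, (SimpleGraph.mem_neighborFinset _ _ _).2 hadj⟩
      exact (Finset.mem_sdiff.1 hw).2 hwN
    · have hvN : v ∈ N S₀ := by
        rw [hNdef, Finset.mem_biUnion]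
        exact ⟨w, hw, (SimpleGraph.mem_neighborFinset _ _ _).2 hadj.symm⟩
      exact (Finset.mem_sdiff.1 hv).2 hvN
    · exact c.valid hadj
        (((hmemY v).1 (Finset.mem_sdiff.1 hv).1).trans
          ((hmemY w).1 (Finset.mem_sdiff.1 hw).1).symm)
  have hAcard : A.card = S₀.card + (Y.card - (N S₀).card) := by
    rw [hAdef, Finset.card_union_of_disjoint, Finset.card_sdiff_of_subset (hNY S₀ hS₀X)]
    rw [Finset.disjoint_left]
    intro v hv hv'
    have h0 := (hmemX v).1 (hS₀X hv)
    have h1 := (hmemY v).1 (Finset.mem_sdiff.1 hv').1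
    omega
  have hann : S₀.card + (Y.card - (N S₀).card) ≤ annNumG G := by
    rw [← hAcard]
    apply le_csSup
    · exact ⟨Fintype.card V, by rintro k ⟨B, rfl, _⟩; exact B.card_le_univ⟩
    · exact ⟨A, rfl, indep_deg_sum G A hAindep⟩
  -- Hall side
  set t : {x // x ∈ X} → Finset (V ⊕ Fin d) :=
    fun x => ((G.neighborFinset x.1).image Sum.inl) ∪
      (Finset.univ.image (Sum.inr : Fin d → V ⊕ Fin d)) with htdef
  have hHall : ∀ s : Finset {x // x ∈ X}, s.card ≤ (s.biUnion t).card := by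
    intro s
    rcases s.eq_empty_or_nonempty with rfl | hne
    · simp
    · set S : Finset V := s.image Subtype.val with hSdef
      have hSX : S ⊆ X := by
        intro v hv
        rw [hSdef, Finset.mem_image] at hv
        obtain ⟨x, _, rfl⟩ := hv
        exact x.2
      have hScard : S.card = s.card := Finset.card_image_of_injective s Subtype.val_injective
      have hsub : ((N S).image Sum.inl ∪
          Finset.univ.image (Sum.inr : Fin d → V ⊕ Fin d)) ⊆ s.biUnion t := by
        intro z hz
        rcases Finset.mem_union.1 hz with hz | hz
        · rw [Finset.mem_image] at hz
          obtain ⟨y, hy, rfl⟩ := hz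
          have hy' : y ∈ S.biUnion (fun v => G.neighborFinset v) := hy
          rw [Finset.mem_biUnion] at hy'
          obtain ⟨v, hvS, hyv⟩ := hy'
          rw [hSdef, Finset.mem_image] at hvS
          obtain ⟨x, hxs, rfl⟩ := hvS
          exact Finset.mem_biUnion.2
            ⟨x, hxs, Finset.mem_union_left _ (Finset.mem_image_of_mem _ hyv)⟩
        · obtain ⟨x, hxs⟩ := hne
          exact Finset.mem_biUnion.2 ⟨x, hxs, Finset.mem_union_right _ hz⟩
      have hdisj : Disjoint ((N S).image (Sum.inl : V → V ⊕ Fin d))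
          (Finset.univ.image (Sum.inr : Fin d → V ⊕ Fin d)) := by
        rw [Finset.disjoint_left]
        intro z hz1 hz2
        rw [Finset.mem_image] at hz1 hz2
        obtain ⟨y, _, rfl⟩ := hz1
        obtain ⟨k, _, hk⟩ := hz2
        exact Sum.inr_ne_inl hk
      have hcard2 : (N S).card + d ≤ (s.biUnion t).card := by
        calc (N S).card + d
            = ((N S).image Sum.inl ∪
                Finset.univ.image (Sum.inr : Fin d → V ⊕ Fin d)).card := by
              rw [Finset.card_union_of_disjoint hdisj,
                Finset.card_image_of_injective _ Sum.inl_injective,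
                Finset.card_image_of_injective _ Sum.inr_injective,
                Finset.card_univ, Fintype.card_fin]
          _ ≤ (s.biUnion t).card := Finset.card_le_card hsub
      have hdef := hmax S hSX
      omega
  obtain ⟨f, hfinj, hft⟩ := (Finset.all_card_le_biUnion_card_iff_exists_injective t).1 hHall
  set X₁ : Finset {x // x ∈ X} := Finset.univ.filter (fun x => (f x).isLeft) with hX₁def
  set hfun : {x // x ∈ X} → V := fun x => Sum.elim id (fun _ => x.1) (f x) with hhdef
  have hkey : ∀ x ∈ X₁, G.Adj x.1 (hfun x) ∧ f x = Sum.inl (hfun x) := by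
    intro x hx
    rw [hX₁def, Finset.mem_filter] at hx
    obtain ⟨y, hy⟩ := Sum.isLeft_iff.1 hx.2
    have hyn : y ∈ G.neighborFinset x.1 := by
      have hfx := hft x
      rw [hy] at hfx
      rcases Finset.mem_union.1 hfx with hz | hz
      · rw [Finset.mem_image] at hz
        obtain ⟨y', hy', he⟩ := hz
        rw [Sum.inl.injEq] at he
        rwa [← he]
      · rw [Finset.mem_image] at hz
        obtain ⟨k, _, hk⟩ := hz
        exact absurd hk (Sum.inr_ne_inl)
    have hh : hfun x = y := by rw [hhdef]; simp [hy]
    refine ⟨?_, by rw [hh, hy]⟩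
    rw [hh]
    exact (SimpleGraph.mem_neighborFinset _ _ _).1 hyn
  have hfunY : ∀ x ∈ X₁, hfun x ∈ Y := fun x hx => hadjXY (hkey x hx).1 x.2
  have hX₁card : X.card - d ≤ X₁.card := by
    set X₂ : Finset {x // x ∈ X} := Finset.univ.filter (fun x => ¬ (f x).isLeft) with hX₂def
    have hsplit : X₁.card + X₂.card = Fintype.card {x // x ∈ X} := by
      rw [hX₁def, hX₂def, Finset.card_filter_add_card_filter_not, Finset.card_univ]
    have hcX : Fintype.card {x // x ∈ X} = X.card := Fintype.card_coe X
    have hX₂le : X₂.card ≤ d := by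
      have himg : X₂.image f ⊆ Finset.univ.image (Sum.inr : Fin d → V ⊕ Fin d) := by
        intro z hz
        rw [Finset.mem_image] at hz
        obtain ⟨x, hx, rfl⟩ := hz
        rw [hX₂def, Finset.mem_filter] at hx
        obtain ⟨k, hk⟩ := Sum.isRight_iff.1 (Sum.not_isLeft.1 hx.2)
        rw [hk]
        exact Finset.mem_image_of_mem _ (Finset.mem_univ k)
      calc X₂.card = (X₂.image f).card := (Finset.card_image_of_injective _ hfinj).symm
        _ ≤ (Finset.univ.image (Sum.inr : Fin d → V ⊕ Fin d)).card := Finset.card_le_card himg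
        _ ≤ d := by
            rw [Finset.card_image_of_injective _ Sum.inr_injective,
              Finset.card_univ, Fintype.card_fin]
    omega
  set M : Finset (Sym2 V) := X₁.image (fun x => s(x.1, hfun x)) with hMdef
  have hMcard : M.card = X₁.card := by
    rw [hMdef]
    apply Finset.card_image_of_injOn
    intro a ha b hb hab
    rcases Sym2.eq_iff.1 hab with ⟨h1, _⟩ | ⟨h1, h2⟩
    · exact Subtype.ext h1
    · exfalso
      have h0 := (hmemX a.1).1 a.2
      have h1' := (hmemY (hfun b)).1 (hfunY b hb)
      rw [h1] at h0
      omega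
  have hMmatch : IsMatchingF G M := by
    constructor
    · intro e he
      rw [hMdef, Finset.mem_image] at he
      obtain ⟨x, hx, rfl⟩ := he
      exact (hkey x hx).1
    · intro e he e' he' hee' v hv
      rw [hMdef, Finset.mem_image] at he he'
      obtain ⟨a, ha, rfl⟩ := he
      obtain ⟨b, hb, rfl⟩ := he'
      obtain ⟨hv1, hv2⟩ := hv
      have hcolor : ∀ x ∈ X₁, ∀ y ∈ X₁, (x : {x // x ∈ X}).1 ≠ hfun y := by
        intro x hx y hy hxy
        have h0 := (hmemX x.1).1 x.2
        have h1 := (hmemY (hfun y)).1 (hfunY y hy)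
        rw [hxy] at h0
        omega
      rcases Sym2.mem_iff.1 hv1 with rfl | rfl <;> rcases Sym2.mem_iff.1 hv2 with h2 | h2
      · exact hee' (by rw [Subtype.ext h2])
      · exact hcolor a ha b hb h2
      · exact hcolor b hb a ha h2.symm
      · have : f a = f b := by
          rw [(hkey a ha).2, (hkey b hb).2, h2]
        exact hee' (by rw [hfinj this])
  have hnu : X.card - d ≤ matchNum G := by
    refine le_trans ?_ (le_csSup ?_ ⟨M, hMmatch, rfl⟩)
    · omega
    · exact ⟨Fintype.card (Sym2 V), by rintro k ⟨B, _, rfl⟩; exact B.card_le_univ⟩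
  have hsx : S₀.card ≤ X.card := Finset.card_le_card hS₀X
  have hty : (N S₀).card ≤ Y.card := Finset.card_le_card (hNY S₀ hS₀X)
  omega
end

section
/- If T is a tree of order n with l leaves, then the nullity of T satisfies null(T) ≥ n - 2·min(n - l, ⌊n/2⌋); in particular if l ≥ ⌈n/2⌉ then null(T) ≥ 2l - n. -/
open SimpleGraph Finset

section Aux

variable {V : Type*} [Fintype V] [DecidableEq V]

lemma adjRow_eq_sum (G : SimpleGraph V) [DecidableRel G.Adj] (v : V) :
    (G.adjMatrix ℚ) v = ∑ u ∈ G.neighborFinset v, Pi.single u (1 : ℚ) := by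
  funext w
  simp only [Finset.sum_apply, Pi.single_apply, SimpleGraph.adjMatrix_apply,
    Finset.sum_ite_eq' (G.neighborFinset v) w (fun _ => (1 : ℚ)),
    SimpleGraph.mem_neighborFinset]
  simp [SimpleGraph.adj_comm]

lemma rank_le_of_rows_mem (A : Matrix V V ℚ) (S : Finset (V → ℚ))
    (h : ∀ v, A v ∈ Submodule.span ℚ (S : Set (V → ℚ))) : A.rank ≤ S.card := by
  rw [Matrix.rank_eq_finrank_span_row]
  have h1 : Submodule.span ℚ (Set.range A) ≤ Submodule.span ℚ (S : Set (V → ℚ)) :=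
    Submodule.span_le.2 (Set.range_subset_iff.2 h)
  exact (Submodule.finrank_mono h1).trans (finrank_span_finset_le_card S)

lemma rank_le_blocks (A : Matrix V V ℚ) (X Y : Finset V) (hcover : ∀ v, v ∈ X ∪ Y)
    (hX : ∀ v ∈ X, A v ∈ Submodule.span ℚ
      ((Y.image fun u => Pi.single u (1 : ℚ)) : Set (V → ℚ)))
    (hY : ∀ v ∈ Y, A v ∈ Submodule.span ℚ
      ((X.image fun u => Pi.single u (1 : ℚ)) : Set (V → ℚ))) :
    A.rank ≤ min X.card Y.card + min X.card Y.card := by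
  classical
  set pX := Submodule.span ℚ ((X.image fun v => A v : Finset (V → ℚ)) : Set (V → ℚ)) with hpX
  set pY := Submodule.span ℚ ((Y.image fun v => A v : Finset (V → ℚ)) : Set (V → ℚ)) with hpY
  have hle : Submodule.span ℚ (Set.range A) ≤ pX ⊔ pY := by
    rw [Submodule.span_le]
    rintro x ⟨v, rfl⟩
    rcases Finset.mem_union.1 (hcover v) with h | h
    · exact Submodule.mem_sup_left (Submodule.subset_span (by
        exact_mod_cast Finset.mem_image_of_mem _ h))
    · exact Submodule.mem_sup_right (Submodule.subset_span (by
        exact_mod_cast Finset.mem_image_of_mem _ h))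
  have hXcard : Module.finrank ℚ pX ≤ X.card :=
    (finrank_span_finset_le_card _).trans (Finset.card_image_le)
  have hYcard : Module.finrank ℚ pY ≤ Y.card :=
    (finrank_span_finset_le_card _).trans (Finset.card_image_le)
  have hXY : Module.finrank ℚ pX ≤ Y.card := by
    have h1 : pX ≤ Submodule.span ℚ ((Y.image fun u => Pi.single u (1 : ℚ)) : Set (V → ℚ)) := by
      rw [hpX, Submodule.span_le]
      intro x hx
      rw [Finset.coe_image] at hx
      obtain ⟨v, hv, rfl⟩ := hx
      exact hX v hv
    exact (Submodule.finrank_mono h1).trans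
      ((finrank_span_finset_le_card _).trans Finset.card_image_le)
  have hYX : Module.finrank ℚ pY ≤ X.card := by
    have h1 : pY ≤ Submodule.span ℚ ((X.image fun u => Pi.single u (1 : ℚ)) : Set (V → ℚ)) := by
      rw [hpY, Submodule.span_le]
      intro x hx
      rw [Finset.coe_image] at hx
      obtain ⟨v, hv, rfl⟩ := hx
      exact hY v hv
    exact (Submodule.finrank_mono h1).trans
      ((finrank_span_finset_le_card _).trans Finset.card_image_le)
  have hsup : Module.finrank ℚ ↥(pX ⊔ pY) ≤ Module.finrank ℚ pX + Module.finrank ℚ pY := by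
    have := Submodule.finrank_sup_add_finrank_inf_eq pX pY
    omega
  rw [Matrix.rank_eq_finrank_span_row]
  calc Module.finrank ℚ (Submodule.span ℚ (Set.range A))
      ≤ Module.finrank ℚ ↥(pX ⊔ pY) := Submodule.finrank_mono hle
    _ ≤ Module.finrank ℚ pX + Module.finrank ℚ pY := hsup
    _ ≤ min X.card Y.card + min X.card Y.card := by
        exact Nat.add_le_add (le_min hXcard hXY) (le_min hYX hYcard)

end Aux

theorem tree_nullity_ge {V : Type*} [Fintype V] [DecidableEq V]
    (G : SimpleGraph V) [DecidableRel G.Adj] (hT : G.IsTree)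
    (hn : 2 < Fintype.card V) :
    (((Fintype.card V - (G.adjMatrix ℚ).rank : ℕ) : ℤ) ≥
      (Fintype.card V : ℤ) -
        2 * min ((Fintype.card V : ℤ) -
            ((Finset.univ.filter fun v => G.degree v = 1).card : ℤ))
          ((Fintype.card V / 2 : ℕ) : ℤ)) ∧
    ((Fintype.card V + 1) / 2 ≤ (Finset.univ.filter fun v => G.degree v = 1).card →
      ((Fintype.card V - (G.adjMatrix ℚ).rank : ℕ) : ℤ) ≥
        2 * ((Finset.univ.filter fun v => G.degree v = 1).card : ℤ) - Fintype.card V) := by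
  classical
  set n := Fintype.card V with hndef
  set A := G.adjMatrix ℚ with hA
  set L := (Finset.univ.filter fun v => G.degree v = 1) with hL
  set M := (Finset.univ.filter fun v => ¬ G.degree v = 1) with hM
  have hLM : L.card + M.card = n := Finset.card_filter_add_card_filter_not _
  -- uniqueness of neighbor for a degree-1 vertex
  have huniq : ∀ v u w : V, G.degree v = 1 → G.Adj v u → G.Adj v w → u = w := by
    intro v u w hv h1 h2
    rw [← SimpleGraph.card_neighborFinset_eq_degree] at hv
    obtain ⟨a, ha⟩ := Finset.card_eq_one.1 hv
    have hu' : u ∈ G.neighborFinset v := (SimpleGraph.mem_neighborFinset _ _ _).2 h1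
    have hw' : w ∈ G.neighborFinset v := (SimpleGraph.mem_neighborFinset _ _ _).2 h2
    rw [ha, Finset.mem_singleton] at hu' hw'
    rw [hu', hw']
  -- leaf neighbors are not leaves
  have hsupp : ∀ v u : V, G.degree v = 1 → G.Adj v u → ¬ G.degree u = 1 := by
    intro v u hv hadj hu
    obtain ⟨w, hw⟩ : ∃ w, w ∉ ({v, u} : Finset V) := by
      by_contra hc
      push_neg at hc
      have h1 : (Finset.univ : Finset V) ⊆ {v, u} := fun x _ => hc x
      have h2 := Finset.card_le_card h1
      have h3 : ({v, u} : Finset V).card ≤ 2 :=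
        (Finset.card_insert_le _ _).trans (by simp)
      rw [Finset.card_univ] at h2
      omega
    simp only [Finset.mem_insert, Finset.mem_singleton, not_or] at hw
    obtain ⟨p⟩ := hT.isConnected.preconnected v w
    obtain ⟨q, hq⟩ : ∃ q : G.Walk v w, q.IsPath := ⟨p.toPath.1, p.toPath.2⟩
    cases q with
    | nil => exact hw.1 rfl
    | @cons _ x _ h1 q' =>
      have hxu : x = u := huniq v x u hv h1 hadj
      subst hxu
      cases q' with
      | nil => exact hw.2 rfl
      | @cons _ y _ h2 q'' =>
        have hyv : y = v := huniq x y v hu h2 hadj.symm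
        subst hyv
        rw [SimpleGraph.Walk.cons_isPath_iff] at hq
        exact hq.2 (by
          rw [SimpleGraph.Walk.support_cons]
          exact List.mem_cons_of_mem _ q''.start_mem_support)
  -- rows of leaves are single basis vectors at non-leaf vertices
  have hleafrow : ∀ v : V, G.degree v = 1 → ∃ u : V, ¬ G.degree u = 1 ∧
      A v = Pi.single u (1 : ℚ) := by
    intro v hv
    have hv' : (G.neighborFinset v).card = 1 := by
      rw [SimpleGraph.card_neighborFinset_eq_degree]; exact hv
    obtain ⟨u, hu⟩ := Finset.card_eq_one.1 hv'
    have hadj : G.Adj v u := by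
      have : u ∈ G.neighborFinset v := by rw [hu]; exact Finset.mem_singleton_self u
      exact (SimpleGraph.mem_neighborFinset _ _ _).1 this
    refine ⟨u, hsupp v u hv hadj, ?_⟩
    rw [hA, adjRow_eq_sum, hu, Finset.sum_singleton]
  -- Claim A : rank ≤ M.card + M.card
  have claimA : A.rank ≤ M.card + M.card := by
    set S := (M.image fun v => A v) ∪ (M.image fun u => Pi.single u (1 : ℚ)) with hS
    have h : ∀ v, A v ∈ Submodule.span ℚ (S : Set (V → ℚ)) := by
      intro v
      by_cases hv : G.degree v = 1
      · obtain ⟨u, hu1, hu2⟩ := hleafrow v hv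
        rw [hu2]
        exact Submodule.subset_span (by
          exact_mod_cast Finset.mem_union_right _
            (Finset.mem_image_of_mem _ (by simp [hM, hu1])))
      · exact Submodule.subset_span (by
          exact_mod_cast Finset.mem_union_left _
            (Finset.mem_image_of_mem _ (by simp [hM, hv])))
    calc A.rank ≤ S.card := rank_le_of_rows_mem A S h
      _ ≤ (M.image fun v => A v).card + (M.image fun u => Pi.single u (1 : ℚ)).card :=
          Finset.card_union_le _ _
      _ ≤ M.card + M.card := Nat.add_le_add Finset.card_image_le Finset.card_image_le
  -- bipartition via path-length parity
  have hnonempty : Nonempty V := Fintype.card_pos_iff.1 (by omega)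
  obtain ⟨r⟩ := hnonempty
  choose f hf hu using fun v => hT.existsUnique_path v r
  have key : ∀ u v : V, G.Adj u v →
      (f u).length = (f v).length + 1 ∨ (f v).length = (f u).length + 1 := by
    intro u v hadj
    by_cases hmem : u ∈ (f v).support
    · right
      have ht : ((f v).takeUntil u hmem).IsPath := (hf v).takeUntil hmem
      have hd : ((f v).dropUntil u hmem).IsPath := (hf v).dropUntil hmem
      have h1 : (f v).takeUntil u hmem = (SimpleGraph.Path.singleton hadj.symm : G.Walk v u) :=
        congrArg Subtype.val
          (hT.IsAcyclic.path_unique ⟨(f v).takeUntil u hmem, ht⟩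
            (SimpleGraph.Path.singleton hadj.symm))
      have h2 : (f v).dropUntil u hmem = f u := hu u _ hd
      have h3 := congrArg SimpleGraph.Walk.length ((f v).take_spec hmem)
      rw [SimpleGraph.Walk.length_append, h1, h2] at h3
      simp only [SimpleGraph.Path.singleton, SimpleGraph.Walk.length_cons,
        SimpleGraph.Walk.length_nil, zero_add] at h3
      omega
    · left
      have hp : (SimpleGraph.Walk.cons hadj (f v)).IsPath := (hf v).cons hmem
      have h2 := hu u _ hp
      have h3 := congrArg SimpleGraph.Walk.length h2
      rw [SimpleGraph.Walk.length_cons] at h3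
      omega
  set X := (Finset.univ.filter fun v => Even (f v).length) with hX
  set Y := (Finset.univ.filter fun v => ¬ Even (f v).length) with hY
  have hXY : X.card + Y.card = n := Finset.card_filter_add_card_filter_not _
  have hflip : ∀ u v : V, G.Adj u v → (Even (f u).length ↔ ¬ Even (f v).length) := by
    intro u v hadj
    rcases key u v hadj with h | h <;> rw [h] <;> simp [Nat.even_add_one]
  have hrowX : ∀ (Z W : Finset V), (∀ v ∈ Z, ∀ u, G.Adj v u → u ∈ W) →
      ∀ v ∈ Z, A v ∈ Submodule.span ℚ ((W.image fun u => Pi.single u (1 : ℚ)) : Set (V → ℚ)) := by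
    intro Z W hZW v hv
    rw [hA, adjRow_eq_sum]
    refine Submodule.sum_mem _ fun u hu' => Submodule.subset_span ?_
    have : u ∈ W := hZW v hv u ((SimpleGraph.mem_neighborFinset _ _ _).1 hu')
    exact_mod_cast Finset.mem_image_of_mem _ this
  have claimB : A.rank ≤ min X.card Y.card + min X.card Y.card := by
    refine rank_le_blocks A X Y (fun v => ?_) ?_ ?_
    · rcases Classical.em (Even (f v).length) with h | h
      · exact Finset.mem_union_left _ (Finset.mem_filter.2 ⟨Finset.mem_univ _, h⟩)
      · exact Finset.mem_union_right _ (Finset.mem_filter.2 ⟨Finset.mem_univ _, h⟩)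
    · refine hrowX X Y ?_
      intro v hv u hadj
      simp only [hX, Finset.mem_filter, Finset.mem_univ, true_and] at hv
      simp only [hY, Finset.mem_filter, Finset.mem_univ, true_and]
      exact fun he => ((hflip u v hadj.symm).1 he) hv
    · refine hrowX Y X ?_
      intro v hv u hadj
      simp only [hY, Finset.mem_filter, Finset.mem_univ, true_and] at hv
      simp only [hX, Finset.mem_filter, Finset.mem_univ, true_and]
      by_contra he
      exact he ((hflip u v hadj.symm).2 hv)
  have hminB : min X.card Y.card ≤ n / 2 := by
    rcases le_total X.card Y.card with h | h
    · rw [min_eq_left h]; omega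
    · rw [min_eq_right h]; omega
  have hrankn : A.rank ≤ n := Matrix.rank_le_card_height A
  -- assemble
  have h1 : (A.rank : ℤ) ≤ 2 * ((n : ℤ) - L.card) := by
    have : A.rank + 2 * L.card ≤ 2 * n := by omega
    push_cast
    have := (Nat.cast_le (α := ℤ)).2 this
    push_cast at this
    linarith
  have h2 : (A.rank : ℤ) ≤ 2 * ((n / 2 : ℕ) : ℤ) := by
    have : A.rank ≤ 2 * (n / 2) := by omega
    exact_mod_cast this
  have hcast : ((n - A.rank : ℕ) : ℤ) = (n : ℤ) - A.rank := by
    exact Nat.cast_sub hrankn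
  constructor
  · rw [ge_iff_le, hcast]
    rcases le_total ((n : ℤ) - L.card) (((n / 2 : ℕ) : ℤ)) with h | h
    · rw [min_eq_left h]; linarith
    · rw [min_eq_right h]; linarith
  · intro _
    rw [ge_iff_le, hcast]
    linarith
end

section
/- Let s be a tree degree sequence of length n > 2 with l entries equal to 1 and annihilation number a(s). If l < ⌈n/2⌉, then there exists a tree T with degree sequence s and matching number ν(T) = ⌊n/2⌋. -/
open SimpleGraph Finset

noncomputable def degC {n : ℕ} (G : SimpleGraph (Fin n)) (v : Fin n) : ℕ := by
  classical exact G.degree v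

/-- `G` has degree sequence `d 0, d 1, …, d (n-1)`. -/
def HasDegSeq {n : ℕ} (d : ℕ → ℕ) (G : SimpleGraph (Fin n)) : Prop :=
  ∃ σ : Equiv.Perm (Fin n), ∀ i : Fin n, degC G (σ i) = d i

/-- Nullity of the adjacency matrix over ℚ. -/
noncomputable def nullityC {n : ℕ} (G : SimpleGraph (Fin n)) : ℕ := by
  classical exact n - (G.adjMatrix ℚ).rank

/-- Annihilation number of the sequence `d` with respect to `n - 1` edges. -/
noncomputable def annNumS (n : ℕ) (d : ℕ → ℕ) : ℕ :=
  sSup {a | a ≤ n ∧ (∑ i ∈ Finset.range a, d i) ≤ n - 1}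

namespace PGr

variable {n : ℕ} (p : ℕ → ℕ)

def PG (n : ℕ) (p : ℕ → ℕ) : SimpleGraph (Fin n) where
  Adj u v := u ≠ v ∧ (p u.val = v.val ∨ p v.val = u.val)
  symm := by
    refine ⟨?_⟩
    intro u v h
    exact ⟨fun e => h.1 e.symm, h.2.symm⟩
  loopless := ⟨fun v h => h.1 rfl⟩

variable (hp : ∀ v, 0 < v → v < n → p v < v) (hp0 : p 0 = 0)

include hp hp0 in
lemma parent_lt {u v : Fin n} (h : p u.val = v.val) (hne : u ≠ v) : v < u := by
  rcases Nat.eq_zero_or_pos u.val with h0 | h0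
  · exfalso; apply hne; apply Fin.ext; rw [h0] at h; rw [hp0] at h; omega
  · have := hp u.val h0 u.isLt
    have : v.val < u.val := by omega
    exact Fin.lt_def.mpr this


include hp hp0 in
lemma adj_iff_parent {u v : Fin n} : (PG n p).Adj u v ↔ (v < u ∧ p u.val = v.val) ∨ (u < v ∧ p v.val = u.val) := by
  constructor
  · rintro ⟨hne, h | h⟩
    · exact Or.inl ⟨parent_lt p hp hp0 h hne, h⟩
    · exact Or.inr ⟨parent_lt p hp hp0 h (fun e => hne e.symm), h⟩
  · rintro (⟨hlt, h⟩ | ⟨hlt, h⟩)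
    · exact ⟨(ne_of_lt hlt).symm, Or.inl h⟩
    · exact ⟨ne_of_lt hlt, Or.inr h⟩

include hp hp0 in
lemma reachable_zero (hn : 0 < n) (v : Fin n) : (PG n p).Reachable v ⟨0, hn⟩ := by
  suffices h : ∀ m : ℕ, ∀ v : Fin n, v.val ≤ m → (PG n p).Reachable v ⟨0, hn⟩ by
    exact h v.val v le_rfl
  intro m
  induction m with
  | zero =>
    intro v hv
    have : v = ⟨0, hn⟩ := Fin.ext (by simpa using (Nat.le_zero.mp hv))
    rw [this]
  | succ m ih =>
    intro v hv
    rcases Nat.eq_zero_or_pos v.val with h0 | h0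
    · have : v = ⟨0, hn⟩ := Fin.ext h0
      rw [this]
    · have hlt : p v.val < v.val := hp v.val h0 v.isLt
      have hplt : p v.val < n := lt_trans hlt v.isLt
      have hadj : (PG n p).Adj v ⟨p v.val, hplt⟩ := by
        refine ⟨?_, Or.inl rfl⟩
        intro e
        have := congrArg Fin.val e
        simp only [] at this
        omega
      exact (hadj.reachable).trans (ih ⟨p v.val, hplt⟩ (by simp; omega))

include hp hp0 in
lemma pg_connected (hn : 0 < n) : (PG n p).Connected := by
  rw [connected_iff]
  refine ⟨fun u v => (reachable_zero p hp hp0 hn u).trans (reachable_zero p hp hp0 hn v).symm, ⟨⟨0, hn⟩⟩⟩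

include hp hp0 in
lemma pg_acyclic : (PG n p).IsAcyclic := by
  classical
  intro v c hc
  have hne : c.support ≠ [] := c.support_ne_nil
  have hnonempty : c.support.toFinset.Nonempty := by
    simp only [List.toFinset_nonempty_iff]; exact hne
  set b : Fin n := c.support.toFinset.max' hnonempty with hb
  have hbmem : b ∈ c.support := by
    have := c.support.toFinset.max'_mem hnonempty
    simpa using this
  have hmax : ∀ w ∈ c.support, w ≤ b := fun w hw =>
    c.support.toFinset.le_max' w (by simpa using hw)
  have hc' := hc.rotate hbmem
  set c' := c.rotate b hbmem with hcdef
  have hmax' : ∀ w ∈ c'.support, w ≤ b := by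
    intro w hw
    rw [SimpleGraph.Walk.support_eq_cons] at hw
    rcases List.mem_cons.mp hw with hw | hw
    · exact le_of_eq hw
    · have hrot := SimpleGraph.Walk.support_rotate c b hbmem
      have : w ∈ c.support.tail := (hrot.mem_iff).mp hw
      exact hmax w (List.mem_of_mem_tail this)
  -- destructure the first edge of c'
  cases hcc : c' with
  | nil => rw [hcc] at hc'; exact SimpleGraph.Walk.IsCycle.not_of_nil hc'
  | cons hadj q =>
    rename_i x
    rw [hcc] at hc' hmax'
    have hxb : x ≠ b := fun e => (PG n p).loopless.irrefl b (e ▸ hadj)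
    have hxmem : x ∈ q.support := q.start_mem_support
    have hxle : x ≤ b := hmax' x (by simp [SimpleGraph.Walk.support_cons, hxmem])
    have hxlt : x < b := lt_of_le_of_ne hxle hxb
    have hpbx : p b.val = x.val := by
      rcases (adj_iff_parent p hp hp0).mp hadj with ⟨h1, h2⟩ | ⟨h1, h2⟩
      · exact h2
      · exact absurd h1 (not_lt.mpr hxle)
    -- destructure the last edge, i.e. first edge of q.reverse
    obtain ⟨y, hady, q2, hq2⟩ := SimpleGraph.Walk.exists_eq_cons_of_ne (fun e => hxb e.symm) q.reverse
    have hymem : y ∈ c'.support := by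
      rw [hcc]
      have h1 : y ∈ q.reverse.support := by rw [hq2]; simp [SimpleGraph.Walk.support_cons]
      rw [SimpleGraph.Walk.support_reverse, List.mem_reverse] at h1
      simp [SimpleGraph.Walk.support_cons, h1]
    have hyb : y ≠ b := fun e => (PG n p).loopless.irrefl b (e ▸ hady)
    have hylt : y < b := lt_of_le_of_ne (hmax' y (hcc ▸ hymem)) hyb
    have hpby : p b.val = y.val := by
      rcases (adj_iff_parent p hp hp0).mp hady with ⟨h1, h2⟩ | ⟨h1, h2⟩
      · exact h2
      · exact absurd h1 (not_lt.mpr (le_of_lt hylt))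
    have hxy : x = y := Fin.ext (hpbx ▸ hpby ▸ rfl)
    -- edges nodup violated
    have hnodup : (SimpleGraph.Walk.cons hadj q).edges.Nodup := hc'.edges_nodup
    rw [SimpleGraph.Walk.edges_cons] at hnodup
    have hmem : s(b, y) ∈ q.edges := by
      have : s(b, y) ∈ q.reverse.edges := by rw [hq2]; simp [SimpleGraph.Walk.edges_cons]
      rwa [SimpleGraph.Walk.edges_reverse, List.mem_reverse] at this
    rw [List.nodup_cons] at hnodup
    exact hnodup.1 (hxy ▸ hmem)


lemma card_filter_fin {n : ℕ} (P : ℕ → Prop) [DecidablePred P] :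
    ((Finset.univ : Finset (Fin n)).filter (fun u => P u.val)).card = ((Finset.range n).filter P).card := by
  apply Finset.card_bij (fun a _ => a.val)
  · intro a ha
    simp only [Finset.mem_filter, Finset.mem_range, Finset.mem_univ, true_and] at ha ⊢
    exact ⟨a.isLt, ha⟩
  · intro a _ b _ h; exact Fin.ext h
  · intro b hb
    simp only [Finset.mem_filter, Finset.mem_range] at hb
    exact ⟨⟨b, hb.1⟩, by simp only [Finset.mem_filter, Finset.mem_univ, true_and]; exact hb.2, rfl⟩

include hp hp0 in
lemma deg_eq (v : Fin n) :
    degC (PG n p) v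
      = ((Finset.range n).filter (fun u => p u = v.val ∧ u ≠ v.val)).card
        + (if v.val = 0 then 0 else 1) := by
  classical
  have h1 : degC (PG n p) v
      = ((Finset.univ : Finset (Fin n)).filter (fun u => (PG n p).Adj v u)).card := by
    simp [degC, SimpleGraph.degree, SimpleGraph.neighborFinset_eq_filter]
  rw [h1]
  have hsplit : ((Finset.univ : Finset (Fin n)).filter (fun u => (PG n p).Adj v u))
      = ((Finset.univ : Finset (Fin n)).filter (fun u : Fin n => p u.val = v.val ∧ u.val ≠ v.val))
        ∪ ((Finset.univ : Finset (Fin n)).filter (fun u : Fin n => p v.val = u.val ∧ u < v)) := by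
    ext u
    simp only [Finset.mem_filter, Finset.mem_union, Finset.mem_univ, true_and]
    constructor
    · intro h
      rcases (adj_iff_parent p hp hp0).mp h with ⟨h1, h2⟩ | ⟨h1, h2⟩
      · exact Or.inr ⟨h2, h1⟩
      · exact Or.inl ⟨h2, by have := Fin.lt_def.mp h1; omega⟩
    · rintro (⟨h1, h2⟩ | ⟨h1, h2⟩)
      · exact ⟨fun e => h2 (congrArg Fin.val e).symm, Or.inr h1⟩
      · exact ⟨(ne_of_lt h2).symm, Or.inl h1⟩
  rw [hsplit, Finset.card_union_of_disjoint]
  · congr 1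
    · exact card_filter_fin (fun u => p u = v.val ∧ u ≠ v.val)
    · rcases Nat.eq_zero_or_pos v.val with h0 | h0
      · rw [h0, if_pos rfl, Finset.card_eq_zero]
        ext u
        simp only [Finset.mem_filter, Finset.mem_univ, true_and, Finset.notMem_empty, iff_false]
        rintro ⟨h1, h2⟩
        have := Fin.lt_def.mp h2
        omega
      · rw [if_neg (by omega)]
        have hplt : p v.val < n := lt_trans (hp v.val h0 v.isLt) v.isLt
        rw [Finset.card_eq_one]
        refine ⟨⟨p v.val, hplt⟩, ?_⟩
        ext u
        simp only [Finset.mem_filter, Finset.mem_univ, true_and, Finset.mem_singleton]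
        constructor
        · rintro ⟨h1, _⟩; exact Fin.ext h1.symm
        · rintro rfl
          exact ⟨rfl, Fin.lt_def.mpr (hp v.val h0 v.isLt)⟩
  · rw [Finset.disjoint_filter]
    rintro u _ ⟨h1, h2⟩ ⟨h3, h4⟩
    have : v < u := parent_lt p hp hp0 h1 (fun e => h2 (congrArg Fin.val e))
    exact absurd h4 (not_lt.mpr (le_of_lt this))

include hp hp0 in
lemma pg_istree (hn : 0 < n) : (PG n p).IsTree :=
  ⟨pg_connected p hp hp0 hn, pg_acyclic p hp hp0⟩


lemma matching_two_mul_card_le {V : Type*} [Fintype V] [DecidableEq V] (G : SimpleGraph V)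
    (M : Finset (Sym2 V)) (h : IsMatchingF G M) : 2 * M.card ≤ Fintype.card V := by
  classical
  have hcard2 : ∀ e ∈ M, ((Finset.univ : Finset V).filter (· ∈ e)).card = 2 := by
    intro e he
    induction e with
    | h a b =>
      have hadj : G.Adj a b := (SimpleGraph.mem_edgeSet G).mp (h.1 _ he)
      have hne : a ≠ b := G.ne_of_adj hadj
      have : ((Finset.univ : Finset V).filter (· ∈ s(a, b))) = {a, b} := by
        ext u
        simp [Sym2.mem_iff]
      rw [this, Finset.card_insert_of_notMem (by simp [hne]), Finset.card_singleton]
  have hdisj : ∀ e ∈ M, ∀ f ∈ M, e ≠ f →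
      Disjoint ((Finset.univ : Finset V).filter (· ∈ e)) ((Finset.univ : Finset V).filter (· ∈ f)) := by
    intro e he f hf hef
    rw [Finset.disjoint_filter]
    intro v _ hv hv'
    exact h.2 e he f hf hef v ⟨hv, hv'⟩
  have hbu : (M.biUnion (fun e => (Finset.univ : Finset V).filter (· ∈ e))).card
      = ∑ e ∈ M, ((Finset.univ : Finset V).filter (· ∈ e)).card := Finset.card_biUnion hdisj
  have hle : (M.biUnion (fun e => (Finset.univ : Finset V).filter (· ∈ e))).card ≤ Fintype.card V :=
    le_trans (Finset.card_le_card (Finset.subset_univ _)) (le_of_eq (Finset.card_univ))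
  rw [hbu] at hle
  rw [Finset.sum_congr rfl hcard2] at hle
  simpa [Finset.sum_const, mul_comm] using hle

lemma matchNum_eq_of {n : ℕ} (G : SimpleGraph (Fin n)) (M : Finset (Sym2 (Fin n)))
    (hM : IsMatchingF G M) (hcard : M.card = n / 2) : matchNum G = n / 2 := by
  have hub : ∀ x ∈ {k | ∃ M : Finset (Sym2 (Fin n)), IsMatchingF G M ∧ M.card = k}, x ≤ n / 2 := by
    rintro x ⟨M', hM', rfl⟩
    have := matching_two_mul_card_le G M' hM'
    rw [Fintype.card_fin] at this
    omega
  have hmem : n / 2 ∈ {k | ∃ M : Finset (Sym2 (Fin n)), IsMatchingF G M ∧ M.card = k} :=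
    ⟨M, hM, hcard⟩
  exact IsGreatest.csSup_eq ⟨hmem, hub⟩

end PGr

open PGr in
structure Ctx where
  n : ℕ
  d : ℕ → ℕ
  l : ℕ
  k : ℕ
  r : ℕ
  hkr : n = 2 * k + r
  hr : r ≤ 1
  hsort : ∀ i j, i ≤ j → j < n → d i ≤ d j
  hpos : ∀ i < n, 1 ≤ d i
  hone : ∀ i < n, (d i = 1 ↔ i < l)
  hsum : ∑ i ∈ Finset.range n, d i = 2 * n - 2
  hl2 : 2 ≤ l
  hlt : l < k + r
  hn5 : 5 ≤ n

namespace Ctx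

variable (C : Ctx)

def q : ℕ := C.k + C.r - C.l
def K : ℕ := C.k + C.r
def al (j : ℕ) : ℕ := if j < C.q then C.d (C.n - 1 - 2*j) else C.d (C.l + C.k - 1 - j)
def be (j : ℕ) : ℕ := if j < C.q then C.d (C.n - 2 - 2*j) else 1
def D (j : ℕ) : ℕ := if j < C.k then C.al j + C.be j - 2 else 1
def cc (j : ℕ) : ℕ := if j < C.K then (if j = 0 then C.D 0 else C.D j - 1) else 0
def o (j : ℕ) : ℕ := 1 + ∑ i ∈ Finset.range j, C.cc i
def a (j : ℕ) : ℕ := if j = 0 then C.al 0 - 1 else C.al j - 2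
def P (t : ℕ) : ℕ := Nat.findGreatest (fun j => C.o j ≤ t) t
def p (v : ℕ) : ℕ :=
  if v = 0 then 0
  else if v % 2 = 1 then v - 1
  else if (v/2) - C.o (C.P (v/2)) < C.a (C.P (v/2)) then 2 * C.P (v/2) else 2 * C.P (v/2) + 1

lemma hln : C.l ≤ C.n := by have := C.hlt; have := C.hkr; have := C.hr; omega

lemma hk2 : 2 ≤ C.k := by have := C.hkr; have := C.hr; have := C.hn5; omega

lemma hq1 : 1 ≤ C.q := by have := C.hlt; simp only [q]; omega

lemma hqk : C.q + (C.l - C.r) = C.k := by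
  have := C.hlt; have := C.hl2; have := C.hr; simp only [q]; omega

lemma hqk1 : C.q ≤ C.k - 1 := by
  have := C.hqk; have := C.hl2; have := C.hr; omega

lemma dge2 : ∀ i, C.l ≤ i → i < C.n → 2 ≤ C.d i := by
  intro i h1 h2
  have := (C.hone i h2)
  have := C.hpos i h2
  omega

lemma d1 : ∀ i < C.l, C.d i = 1 := by
  intro i hi
  have hin : i < C.n := lt_of_lt_of_le hi C.hln
  exact (C.hone i hin).mpr hi

lemma al_ge : ∀ j < C.k, 2 ≤ C.al j := by
  intro j hj
  simp only [al]
  split_ifs with h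
  · apply C.dge2 <;> [skip; skip] <;>
      · have := C.hqk; have := C.hq1; have := C.hkr; have := C.hr; have := C.hl2
        simp only [q] at h ⊢
        omega
  · apply C.dge2 <;>
      · have := C.hqk; have := C.hq1; have := C.hkr; have := C.hr; have := C.hl2
        simp only [q] at h ⊢
        omega

lemma be_ge1 : ∀ j < C.k, 1 ≤ C.be j := by
  intro j hj
  simp only [be]
  split_ifs with h
  · apply le_trans (by norm_num) (C.dge2 _ ?_ ?_) <;>
      · have := C.hqk; have := C.hq1; have := C.hkr; have := C.hr; have := C.hl2
        simp only [q] at h ⊢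
        omega
  · omega

lemma be_ge2 : ∀ j < C.q, 2 ≤ C.be j := by
  intro j hj
  simp only [be, if_pos hj]
  apply C.dge2 <;>
    · have := C.hqk; have := C.hq1; have := C.hkr; have := C.hr; have := C.hl2
      simp only [q] at hj ⊢
      omega

lemma D_ge1 : ∀ j < C.K, 1 ≤ C.D j := by
  intro j hj
  simp only [D]
  split_ifs with h
  · have := C.al_ge j h; have := C.be_ge1 j h; omega
  · omega


lemma D_anti : ∀ j, j + 1 < C.K → C.D (j+1) ≤ C.D j := by
  intro j hj
  have hq : C.q = C.k + C.r - C.l := rfl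
  have hK : C.K = C.k + C.r := rfl
  have h1 := C.hkr; have h2 := C.hr; have h3 := C.hl2; have h4 := C.hlt; have h5 := C.hn5
  have hqk := C.hqk
  by_cases hjk : j + 1 < C.k
  · by_cases hjq : j + 1 < C.q
    · have e1 : C.D j = C.d (C.n - 1 - 2*j) + C.d (C.n - 2 - 2*j) - 2 := by
        simp only [D, al, be, if_pos (show j < C.k by omega), if_pos (show j < C.q by omega)]
      have e2 : C.D (j+1) = C.d (C.n - 1 - 2*(j+1)) + C.d (C.n - 2 - 2*(j+1)) - 2 := by
        simp only [D, al, be, if_pos hjk, if_pos hjq]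
      have m1 : C.d (C.n - 1 - 2*(j+1)) ≤ C.d (C.n - 1 - 2*j) :=
        C.hsort _ _ (by omega) (by omega)
      have m2 : C.d (C.n - 2 - 2*(j+1)) ≤ C.d (C.n - 2 - 2*j) :=
        C.hsort _ _ (by omega) (by omega)
      omega
    · by_cases hjq2 : j < C.q
      · have e1 : C.D j = C.al j + C.d (C.n - 2 - 2*j) - 2 := by
          simp only [D, be, if_pos (show j < C.k by omega), if_pos hjq2]
        have e2 : C.D (j+1) = C.al (j+1) + 1 - 2 := by
          simp only [D, be, if_pos hjk, if_neg hjq]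
        have e3 : C.al (j+1) = C.d (C.l + C.k - 1 - (j+1)) := by
          simp only [al, if_neg hjq]
        have m1 : C.d (C.l + C.k - 1 - (j+1)) ≤ C.d (C.n - 2 - 2*j) :=
          C.hsort _ _ (by omega) (by omega)
        have m2 := C.al_ge j (by omega)
        omega
      · have e1 : C.D j = C.al j + 1 - 2 := by
          simp only [D, be, if_pos (show j < C.k by omega), if_neg hjq2]
        have e2 : C.D (j+1) = C.al (j+1) + 1 - 2 := by
          simp only [D, be, if_pos hjk, if_neg hjq]
        have e3 : C.al (j+1) = C.d (C.l + C.k - 1 - (j+1)) := by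
          simp only [al, if_neg hjq]
        have e4 : C.al j = C.d (C.l + C.k - 1 - j) := by
          simp only [al, if_neg hjq2]
        have m1 : C.d (C.l + C.k - 1 - (j+1)) ≤ C.d (C.l + C.k - 1 - j) :=
          C.hsort _ _ (by omega) (by omega)
        omega
  · have e2 : C.D (j+1) = 1 := by simp only [D, if_neg hjk]
    have := C.D_ge1 j (by omega)
    omega

lemma D_anti' : ∀ i j, i ≤ j → j < C.K → C.D j ≤ C.D i := by
  intro i j
  induction j with
  | zero =>
    intro hij _
    have : i = 0 := by omega
    subst this; exact le_refl _
  | succ m ih =>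
    intro hij hj
    rcases Nat.lt_or_ge i (m+1) with h | h
    · exact le_trans (C.D_anti m hj) (ih (by omega) (by omega))
    · have : i = m + 1 := by omega
      subst this; exact le_refl _

lemma ite_sum1 : ∀ m : ℕ, ∑ j ∈ Finset.range (m+1), (if j = 0 then (0:ℕ) else 1) = m := by
  intro m
  induction m with
  | zero => simp
  | succ m ih => rw [Finset.sum_range_succ, ih]; simp

lemma ite_sum2 : ∀ m : ℕ, ∑ j ∈ Finset.range (m+1), (if j = 0 then (2:ℕ) else 1) = m + 2 := by
  intro m
  induction m with
  | zero => simp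
  | succ m ih => rw [Finset.sum_range_succ, ih]; simp

lemma pairsum : ∀ Q, 2*Q ≤ C.n →
    ∑ j ∈ Finset.range Q, (C.d (C.n - 1 - 2*j) + C.d (C.n - 2 - 2*j))
      = ∑ i ∈ Finset.Ico (C.n - 2*Q) C.n, C.d i := by
  intro Q
  induction Q with
  | zero => simp
  | succ m ih =>
    intro h
    rw [Finset.sum_range_succ, ih (by omega)]
    rw [show C.n - 2*(m+1) = C.n - 2*m - 2 by omega]
    rw [← Finset.sum_Ico_consecutive C.d (show C.n - 2*m - 2 ≤ C.n - 2*m by omega)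
        (show C.n - 2*m ≤ C.n by omega)]
    have hpair : Finset.Ico (C.n - 2*m - 2) (C.n - 2*m) = {C.n - 2*m - 2, C.n - 2*m - 1} := by
      ext x; simp only [Finset.mem_Ico, Finset.mem_insert, Finset.mem_singleton]; omega
    rw [hpair, Finset.sum_pair (by omega)]
    have e1 : C.n - 1 - 2*m = C.n - 2*m - 1 := by omega
    have e2 : C.n - 2 - 2*m = C.n - 2*m - 2 := by omega
    rw [e1, e2]; ring

lemma sum_d_prefix : ∑ i ∈ Finset.range C.l, C.d i = C.l := by
  rw [Finset.sum_congr rfl (fun i hi => C.d1 i (Finset.mem_range.mp hi))]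
  simp

lemma sum_albe : ∑ j ∈ Finset.range C.k, (C.al j + C.be j) = 2*C.n - 2 - C.r := by
  have hq : C.q = C.k + C.r - C.l := rfl
  have h1 := C.hkr; have h2 := C.hr; have h3 := C.hl2; have h4 := C.hlt; have h5 := C.hn5
  have hqk := C.hqk
  rw [Finset.range_eq_Ico, ← Finset.sum_Ico_consecutive _ (Nat.zero_le C.q) (show C.q ≤ C.k by omega)]
  have hA : ∑ j ∈ Finset.Ico 0 C.q, (C.al j + C.be j)
      = ∑ i ∈ Finset.Ico (C.n - 2*C.q) C.n, C.d i := by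
    rw [← Finset.range_eq_Ico]
    rw [← C.pairsum C.q (by omega)]
    apply Finset.sum_congr rfl
    intro j hj
    rw [Finset.mem_range] at hj
    simp only [al, be, if_pos hj]
  have hB : ∑ j ∈ Finset.Ico C.q C.k, (C.al j + C.be j)
      = (∑ i ∈ Finset.Ico C.l (2*C.l - C.r), C.d i) + (C.k - C.q) := by
    have hstep : ∑ j ∈ Finset.Ico C.q C.k, (C.al j + C.be j)
        = ∑ j ∈ Finset.Ico C.q C.k, (C.d (C.l + C.k - 1 - j) + 1) := by
      apply Finset.sum_congr rfl
      intro j hj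
      rw [Finset.mem_Ico] at hj
      simp only [al, be, if_neg (show ¬ j < C.q by omega)]
    rw [hstep, Finset.sum_add_distrib]
    simp only [Finset.sum_const, Nat.card_Ico, smul_eq_mul, mul_one]
    congr 1
    rw [Finset.sum_Ico_eq_sum_range]
    have hre : ∀ j ∈ Finset.range (C.k - C.q), C.d (C.l + C.k - 1 - (C.q + j))
        = (fun x => C.d (C.l + x)) ((C.k - C.q) - 1 - j) := by
      intro j hj
      rw [Finset.mem_range] at hj
      simp only []
      congr 1
      omega
    rw [Finset.sum_congr rfl hre, Finset.sum_range_reflect (fun x => C.d (C.l + x)) (C.k - C.q)]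
    rw [Finset.sum_Ico_eq_sum_range]
    apply Finset.sum_congr
    · congr 1; omega
    · intro j _; rfl
  rw [hA, hB]
  have hIco : (∑ i ∈ Finset.Ico (C.n - 2*C.q) C.n, C.d i) + (∑ i ∈ Finset.Ico C.l (2*C.l - C.r), C.d i)
      = ∑ i ∈ Finset.Ico C.l C.n, C.d i := by
    rw [show C.n - 2*C.q = 2*C.l - C.r by omega]
    rw [add_comm]
    exact Finset.sum_Ico_consecutive _ (by omega) (by omega)
  have hsuffix : ∑ i ∈ Finset.Ico C.l C.n, C.d i = 2*C.n - 2 - C.l := by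
    have := C.hsum
    have hsplit : (∑ i ∈ Finset.range C.l, C.d i) + (∑ i ∈ Finset.Ico C.l C.n, C.d i)
        = ∑ i ∈ Finset.range C.n, C.d i := by
      simp only [Finset.range_eq_Ico]
      exact Finset.sum_Ico_consecutive _ (Nat.zero_le _) C.hln
    rw [C.sum_d_prefix] at hsplit
    omega
  omega

lemma sumD : ∑ j ∈ Finset.range C.K, C.D j = 2*C.K - 2 := by
  have hK : C.K = C.k + C.r := rfl
  have h1 := C.hkr; have h2 := C.hr; have h5 := C.hn5; have hk2 := C.hk2
  have hDk : ∑ j ∈ Finset.range C.k, (C.D j + 2) = ∑ j ∈ Finset.range C.k, (C.al j + C.be j) := by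
    apply Finset.sum_congr rfl
    intro j hj
    rw [Finset.mem_range] at hj
    have := C.al_ge j hj; have := C.be_ge1 j hj
    simp only [D, if_pos hj]
    omega
  rw [Finset.sum_add_distrib] at hDk
  simp only [Finset.sum_const, Finset.card_range, smul_eq_mul, mul_one] at hDk
  have hsa := C.sum_albe
  by_cases hr0 : C.r = 0
  · have : C.K = C.k := by omega
    rw [this]
    omega
  · have hKk : C.K = C.k + 1 := by omega
    rw [hKk, Finset.sum_range_succ]
    have hDkk : C.D C.k = 1 := by simp only [D, if_neg (lt_irrefl C.k)]
    omega

lemma sumcc : ∑ j ∈ Finset.range C.K, C.cc j = C.K - 1 := by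
  have hK1 : 1 ≤ C.K := by have := C.hk2; have hK : C.K = C.k + C.r := rfl; omega
  have h : ∑ j ∈ Finset.range C.K, (C.cc j + (if j = 0 then 0 else 1))
      = ∑ j ∈ Finset.range C.K, C.D j := by
    apply Finset.sum_congr rfl
    intro j hj
    rw [Finset.mem_range] at hj
    by_cases hj0 : j = 0
    · subst hj0; simp [cc, hj]
    · simp only [cc, if_pos hj, if_neg hj0]
      have := C.D_ge1 j hj
      omega
  rw [Finset.sum_add_distrib] at h
  obtain ⟨K', hK'⟩ : ∃ K', C.K = K' + 1 := ⟨C.K - 1, by omega⟩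
  have hD := C.sumD
  rw [hK'] at h hD ⊢
  rw [ite_sum1 K'] at h
  omega

lemma o_zero : C.o 0 = 1 := by simp [o]

lemma o_ge1 (j : ℕ) : 1 ≤ C.o j := by simp [o]

lemma o_succ (j : ℕ) : C.o (j+1) = C.o j + C.cc j := by
  simp [o, Finset.sum_range_succ]; omega

lemma o_mono : ∀ i j, i ≤ j → C.o i ≤ C.o j := by
  intro i j hij
  simp only [o]
  have := Finset.sum_le_sum_of_subset (f := C.cc) (Finset.range_subset_range.mpr hij)
  omega

lemma o_K : C.o C.K = C.K := by
  have hK1 : 1 ≤ C.K := by have := C.hk2; have hK : C.K = C.k + C.r := rfl; omega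
  simp only [o, C.sumcc]
  omega

lemma o_ge_K : ∀ j, C.K ≤ j → C.o j = C.K := by
  intro j hj
  have h : ∑ i ∈ Finset.range j, C.cc i = ∑ i ∈ Finset.range C.K, C.cc i := by
    simp only [Finset.range_eq_Ico]
    rw [← Finset.sum_Ico_consecutive _ (Nat.zero_le C.K) hj]
    have : ∑ i ∈ Finset.Ico C.K j, C.cc i = 0 := by
      apply Finset.sum_eq_zero
      intro i hi
      rw [Finset.mem_Ico] at hi
      simp only [cc, if_neg (show ¬ i < C.K by omega)]
    omega
  have := C.o_K
  simp only [o] at *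
  omega

lemma o_lb (t i : ℕ) (hti : t ≤ i) (hiK : i < C.K) (hcc : 1 ≤ C.cc i) (ht : 1 ≤ t) :
    t + 2 ≤ C.o t := by
  have hi1 : 1 ≤ i := le_trans ht hti
  have hDi : 2 ≤ C.D i := by
    simp only [cc, if_pos hiK, if_neg (show ¬ i = 0 by omega)] at hcc
    have := C.D_ge1 i hiK
    omega
  have hD : ∀ i', i' ≤ i → 2 ≤ C.D i' := fun i' h => le_trans hDi (C.D_anti' i' i h hiK)
  have hlow : ∀ i' ∈ Finset.range t, (if i' = 0 then (2:ℕ) else 1) ≤ C.cc i' := by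
    intro i' hi'
    rw [Finset.mem_range] at hi'
    by_cases h0 : i' = 0
    · subst h0
      simp only [cc, if_pos (show 0 < C.K by omega), if_pos rfl]
      exact hD 0 (Nat.zero_le _)
    · simp only [cc, if_pos (show i' < C.K by omega), if_neg h0, if_neg h0]
      have := hD i' (by omega)
      omega
  have hsum := Finset.sum_le_sum hlow
  obtain ⟨t', ht'⟩ : ∃ t', t = t' + 1 := ⟨t - 1, by omega⟩
  subst ht'
  rw [ite_sum2 t'] at hsum
  simp only [o]
  omega

lemma P_le (t : ℕ) : C.P t ≤ t := Nat.findGreatest_le t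

lemma P_base (t : ℕ) (ht : 1 ≤ t) : C.o (C.P t) ≤ t :=
  Nat.findGreatest_spec (P := fun j => C.o j ≤ t) (Nat.zero_le t) (by show C.o 0 ≤ t; rw [C.o_zero]; exact ht)

lemma P_lt_self (t : ℕ) (ht : 1 ≤ t) (htK : t < C.K) : C.P t < t := by
  by_contra h
  have hPt : C.P t = t := by have := C.P_le t; omega
  have hot : C.o t ≤ t := by have h2 := C.P_base t ht; rw [hPt] at h2; exact h2
  have hsplit : C.o C.K = C.o t + ∑ i ∈ Finset.Ico t C.K, C.cc i := by
    simp only [o]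
    simp only [Finset.range_eq_Ico]
    rw [← Finset.sum_Ico_consecutive _ (Nat.zero_le t) (le_of_lt htK)]
    omega
  rw [C.o_K] at hsplit
  have hpos : ∑ i ∈ Finset.Ico t C.K, C.cc i ≠ 0 := by omega
  obtain ⟨i, hi, hine⟩ := Finset.exists_ne_zero_of_sum_ne_zero hpos
  rw [Finset.mem_Ico] at hi
  have := C.o_lb t i hi.1 hi.2 (by omega) ht
  omega

lemma P_upper (t : ℕ) (ht : 1 ≤ t) (htK : t < C.K) : t < C.o (C.P t) + C.cc (C.P t) := by
  rw [← C.o_succ]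
  have h1 : C.P t + 1 ≤ t := C.P_lt_self t ht htK
  by_contra h
  exact (Nat.findGreatest_is_greatest (by omega : C.P t < C.P t + 1) h1) (by omega)

lemma P_ltK (t : ℕ) (ht : 1 ≤ t) (htK : t < C.K) : C.P t < C.K := by
  by_contra h
  have := C.o_ge_K (C.P t) (by omega)
  have := C.P_base t ht
  omega

lemma P_eq (j t : ℕ) (hjK : j < C.K) (h1 : C.o j ≤ t) (h2 : t < C.o j + C.cc j) : C.P t = j := by
  have hcc : 1 ≤ C.cc j := by omega
  have ht1 : 1 ≤ t := le_trans (C.o_ge1 j) h1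
  have hjt : j ≤ t := by
    by_cases h0 : j = 0
    · omega
    · have := C.o_lb j j le_rfl hjK hcc (by omega)
      omega
  have hge : j ≤ C.P t := Nat.le_findGreatest hjt h1
  have hle : C.P t ≤ j := by
    by_contra h
    have hj1 : j + 1 ≤ C.P t := by omega
    have := C.o_mono (j+1) (C.P t) hj1
    have := C.P_base t ht1
    have := C.o_succ j
    omega
  omega


lemma p_zero : C.p 0 = 0 := by simp [p]

lemma p_odd (v : ℕ) (h : v % 2 = 1) : C.p v = v - 1 := by
  simp only [p, if_neg (show ¬ v = 0 by omega), if_pos h]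

lemma p_even (t : ℕ) (ht : 1 ≤ t) :
    C.p (2*t) = if t - C.o (C.P t) < C.a (C.P t) then 2 * C.P t else 2 * C.P t + 1 := by
  have h3 : 2*t/2 = t := by omega
  simp only [p, if_neg (show ¬ 2*t = 0 by omega), if_neg (show ¬ 2*t % 2 = 1 by omega), h3]

lemma hkK : C.k ≤ C.K := by have : C.K = C.k + C.r := rfl; omega

lemma tbound (u : ℕ) (hu : u < C.n) (h2 : u % 2 = 0) (h0 : 1 ≤ u) :
    ∃ t, u = 2*t ∧ 1 ≤ t ∧ t < C.K := by
  have hK : C.K = C.k + C.r := rfl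
  have := C.hkr; have := C.hr
  exact ⟨u/2, by omega, by omega, by omega⟩

lemma p_lt : ∀ v, 0 < v → v < C.n → C.p v < v := by
  intro v h0 hn
  rcases Nat.even_or_odd v with he | ho
  · obtain ⟨t, ht, ht1, htK⟩ := C.tbound v hn (Nat.even_iff.mp he) h0
    subst ht
    rw [C.p_even t ht1]
    have := C.P_lt_self t ht1 htK
    split_ifs <;> omega
  · rw [C.p_odd v (Nat.odd_iff.mp ho)]
    omega

lemma a_le_cc : ∀ j < C.k, C.a j ≤ C.cc j := by
  intro j hj
  have hjK : j < C.K := lt_of_lt_of_le hj C.hkK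
  have h1 := C.al_ge j hj
  have h2 := C.be_ge1 j hj
  have h3 := C.al_ge 0 (by have := C.hk2; omega)
  have h4 := C.be_ge1 0 (by have := C.hk2; omega)
  simp only [a, cc, D]
  split_ifs <;> omega

lemma childOdd (j : ℕ) (hj : j < C.k) :
    ((Finset.range C.n).filter (fun u => C.p u = 2*j+1 ∧ u ≠ 2*j+1))
      = (Finset.Ico (C.o j + C.a j) (C.o j + C.cc j)).image (fun t => 2*t) := by
  have hjK : j < C.K := lt_of_lt_of_le hj C.hkK
  have hK : C.K = C.k + C.r := rfl
  have hnn := C.hkr; have hrr := C.hr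
  ext u
  simp only [Finset.mem_filter, Finset.mem_range, Finset.mem_image, Finset.mem_Ico]
  constructor
  · rintro ⟨hun, hpu, hne⟩
    rcases Nat.eq_zero_or_pos u with h0 | h0
    · subst h0; rw [C.p_zero] at hpu; omega
    rcases Nat.even_or_odd u with he | ho
    · obtain ⟨t, ht, ht1, htK⟩ := C.tbound u hun (Nat.even_iff.mp he) h0
      subst ht
      rw [C.p_even t ht1] at hpu
      have hPb := C.P_base t ht1
      have hPu := C.P_upper t ht1 htK
      split_ifs at hpu with hsplit
      · exact absurd hpu (by omega)
      · have hPt : C.P t = j := by omega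
        rw [hPt] at hPb hPu hsplit
        exact ⟨t, ⟨by omega, by omega⟩, rfl⟩
    · rw [C.p_odd u (Nat.odd_iff.mp ho)] at hpu
      have hu2 := Nat.odd_iff.mp ho
      exact absurd hpu (by omega)
  · rintro ⟨t, ⟨h1, h2⟩, rfl⟩
    have hccj : 1 ≤ C.cc j := by have := C.a_le_cc j hj; omega
    have ht1 : 1 ≤ t := by have := C.o_ge1 j; omega
    have hPt : C.P t = j := C.P_eq j t hjK (by omega) h2
    have htK : t < C.K := by
      have h3 : C.o j + C.cc j = C.o (j+1) := (C.o_succ j).symm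
      have h4 : C.o (j+1) ≤ C.o C.K := C.o_mono (j+1) C.K (by omega)
      rw [C.o_K] at h4
      omega
    refine ⟨by omega, ?_, by omega⟩
    rw [C.p_even t ht1, hPt, if_neg (by omega)]

lemma childEven (j : ℕ) (hj : j < C.k) :
    ((Finset.range C.n).filter (fun u => C.p u = 2*j ∧ u ≠ 2*j))
      = insert (2*j+1) ((Finset.Ico (C.o j) (C.o j + C.a j)).image (fun t => 2*t)) := by
  have hjK : j < C.K := lt_of_lt_of_le hj C.hkK
  have hK : C.K = C.k + C.r := rfl
  have hnn := C.hkr; have hrr := C.hr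
  have hale := C.a_le_cc j hj
  ext u
  simp only [Finset.mem_filter, Finset.mem_range, Finset.mem_image, Finset.mem_Ico,
    Finset.mem_insert]
  constructor
  · rintro ⟨hun, hpu, hne⟩
    rcases Nat.eq_zero_or_pos u with h0 | h0
    · subst h0; rw [C.p_zero] at hpu; omega
    rcases Nat.even_or_odd u with he | ho
    · obtain ⟨t, ht, ht1, htK⟩ := C.tbound u hun (Nat.even_iff.mp he) h0
      subst ht
      rw [C.p_even t ht1] at hpu
      have hPb := C.P_base t ht1
      have hPu := C.P_upper t ht1 htK
      split_ifs at hpu with hsplit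
      · have hPt : C.P t = j := by omega
        rw [hPt] at hPb hPu hsplit
        exact Or.inr ⟨t, ⟨by omega, by omega⟩, rfl⟩
      · exact absurd hpu (by omega)
    · rw [C.p_odd u (Nat.odd_iff.mp ho)] at hpu
      have hu2 := Nat.odd_iff.mp ho
      left
      omega
  · rintro (rfl | ⟨t, ⟨h1, h2⟩, rfl⟩)
    · refine ⟨by omega, ?_, by omega⟩
      rw [C.p_odd (2*j+1) (by omega)]
      omega
    · have hccj : 1 ≤ C.cc j := by omega
      have ht1 : 1 ≤ t := le_trans (C.o_ge1 j) h1
      have hPt : C.P t = j := C.P_eq j t hjK h1 (by omega)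
      have htK : t < C.K := by
        have h3 : C.o j + C.cc j = C.o (j+1) := (C.o_succ j).symm
        have h4 : C.o (j+1) ≤ C.o C.K := C.o_mono (j+1) C.K (by omega)
        rw [C.o_K] at h4
        omega
      have hoj : j < C.o j := by
        by_cases h0 : j = 0
        · subst h0; rw [C.o_zero]; omega
        · have := C.o_lb j j le_rfl hjK hccj (by omega)
          omega
      refine ⟨by omega, ?_, by omega⟩
      rw [C.p_even t ht1, hPt, if_pos (by omega)]

lemma childLast (hr1 : C.r = 1) :
    ((Finset.range C.n).filter (fun u => C.p u = 2*C.k ∧ u ≠ 2*C.k)) = ∅ := by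
  have hK : C.K = C.k + C.r := rfl
  have hnn := C.hkr
  ext u
  simp only [Finset.mem_filter, Finset.mem_range, Finset.notMem_empty, iff_false]
  rintro ⟨hun, hpu, hne⟩
  rcases Nat.eq_zero_or_pos u with h0 | h0
  · subst h0; rw [C.p_zero] at hpu; have := C.hk2; omega
  rcases Nat.even_or_odd u with he | ho
  · obtain ⟨t, ht, ht1, htK⟩ := C.tbound u hun (Nat.even_iff.mp he) h0
    subst ht
    rw [C.p_even t ht1] at hpu
    have hPb := C.P_base t ht1
    have hPu := C.P_upper t ht1 htK
    have hcck : C.cc C.k = 0 := by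
      simp only [cc, if_pos (show C.k < C.K by omega), if_neg (show ¬ C.k = 0 by have := C.hk2; omega),
        D, if_neg (lt_irrefl C.k)]
    split_ifs at hpu with hsplit
    · have hPt : C.P t = C.k := by omega
      rw [hPt, hcck] at hPu
      rw [hPt] at hPb
      omega
    · have hPt : C.P t = C.k := by omega
      rw [hPt, hcck] at hPu
      rw [hPt] at hPb
      omega
  · rw [C.p_odd u (Nat.odd_iff.mp ho)] at hpu
    omega


lemma two_mul_inj : Function.Injective (fun t : ℕ => 2*t) := by
  intro a b h; simp only [] at h; omega

lemma deg_odd (j : ℕ) (hj : j < C.k) (v : Fin C.n) (hv : v.val = 2*j+1) :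
    degC (PGr.PG C.n C.p) v = C.be j := by
  rw [PGr.deg_eq C.p C.p_lt C.p_zero v, hv, C.childOdd j hj,
    Finset.card_image_of_injective _ two_mul_inj, Nat.card_Ico]
  have h1 := C.al_ge j hj
  have h2 := C.be_ge1 j hj
  have h3 := C.a_le_cc j hj
  have hjK : j < C.K := lt_of_lt_of_le hj C.hkK
  have h4 := C.al_ge 0 (by omega)
  have h5 := C.be_ge1 0 (by omega)
  rw [if_neg (show ¬ 2*j+1 = 0 by omega)]
  by_cases h0 : j = 0
  · subst h0
    simp only [cc, a, D, if_pos hjK, if_pos rfl, if_pos hj, if_true]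
    omega
  · simp only [cc, a, D, if_pos hjK, if_neg h0, if_pos hj]
    omega

lemma deg_even (j : ℕ) (hj : j < C.k) (v : Fin C.n) (hv : v.val = 2*j) :
    degC (PGr.PG C.n C.p) v = C.al j := by
  rw [PGr.deg_eq C.p C.p_lt C.p_zero v, hv, C.childEven j hj]
  rw [Finset.card_insert_of_notMem (by
    simp only [Finset.mem_image, Finset.mem_Ico]
    rintro ⟨t, _, ht⟩
    omega)]
  rw [Finset.card_image_of_injective _ two_mul_inj, Nat.card_Ico]
  have h1 := C.al_ge j hj
  have h2 := C.be_ge1 j hj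
  have h3 := C.a_le_cc j hj
  have hjK : j < C.K := lt_of_lt_of_le hj C.hkK
  have h4 := C.al_ge 0 (by omega)
  have h5 := C.be_ge1 0 (by omega)
  by_cases h0 : j = 0
  · subst h0
    rw [if_pos (by omega)]
    simp only [a, if_pos rfl, if_true]
    omega
  · rw [if_neg (show ¬ 2*j = 0 by omega)]
    simp only [a, if_neg h0]
    omega

lemma deg_last (hr1 : C.r = 1) (v : Fin C.n) (hv : v.val = 2*C.k) :
    degC (PGr.PG C.n C.p) v = 1 := by
  rw [PGr.deg_eq C.p C.p_lt C.p_zero v, hv, C.childLast hr1]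
  rw [if_neg (show ¬ 2*C.k = 0 by have := C.hk2; omega)]
  simp

def sN (i : ℕ) : ℕ :=
  if i < C.l - C.r then 2*C.q + 2*i + 1
  else if i < C.l then C.n - 1
  else if i < 2*C.l - C.r then 2*C.k - 2 - 2*(i - C.l)
  else C.n - 1 - i

lemma sN_lt (i : ℕ) (hi : i < C.n) : C.sN i < C.n := by
  have hq : C.q = C.k + C.r - C.l := rfl
  have h1 := C.hkr; have h2 := C.hr; have h3 := C.hl2; have h4 := C.hlt; have h5 := C.hn5
  simp only [sN]
  split_ifs <;> omega

lemma sN_inj (i1 : ℕ) (hi1 : i1 < C.n) (i2 : ℕ) (hi2 : i2 < C.n) (h : C.sN i1 = C.sN i2) :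
    i1 = i2 := by
  have hq : C.q = C.k + C.r - C.l := rfl
  have h1 := C.hkr; have h2 := C.hr; have h3 := C.hl2; have h4 := C.hlt; have h5 := C.hn5
  simp only [sN] at h
  split_ifs at h <;> omega

lemma deg_sN (i : ℕ) (hi : i < C.n) (v : Fin C.n) (hv : v.val = C.sN i) :
    degC (PGr.PG C.n C.p) v = C.d i := by
  have hq : C.q = C.k + C.r - C.l := rfl
  have h1 := C.hkr; have h2 := C.hr; have h3 := C.hl2; have h4 := C.hlt; have h5 := C.hn5
  have hqk1 := C.hqk1
  simp only [sN] at hv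
  split_ifs at hv with hb1 hb2 hb3
  · -- leaf paired: vertex 2(q+i)+1
    rw [C.deg_odd (C.q + i) (by omega) v (by omega)]
    have : C.be (C.q + i) = 1 := by simp only [be, if_neg (show ¬ C.q + i < C.q by omega)]
    rw [this, C.d1 i (by omega)]
  · -- singleton leaf: r = 1, vertex n - 1 = 2k
    have hr1 : C.r = 1 := by omega
    rw [C.deg_last hr1 v (by omega), C.d1 i (by omega)]
  · -- small internal: vertex 2j, j = k-1-(i-l)
    rw [C.deg_even (C.k - 1 - (i - C.l)) (by omega) v (by omega)]
    have : C.al (C.k - 1 - (i - C.l)) = C.d (C.l + C.k - 1 - (C.k - 1 - (i - C.l))) := by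
      simp only [al, if_neg (show ¬ C.k - 1 - (i - C.l) < C.q by omega)]
    rw [this]
    congr 1
    omega
  · -- big internal: vertex n-1-i
    rcases Nat.even_or_odd (C.n - 1 - i) with he | ho
    · have he2 := Nat.even_iff.mp he
      set j := (C.n - 1 - i) / 2 with hjdef
      have hj2 : C.n - 1 - i = 2*j := by omega
      have hjq : j < C.q := by omega
      rw [C.deg_even j (by omega) v (by omega)]
      have : C.al j = C.d (C.n - 1 - 2*j) := by simp only [al, if_pos hjq]
      rw [this]
      congr 1
      omega
    · have ho2 := Nat.odd_iff.mp ho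
      set j := (C.n - 1 - i) / 2 with hjdef
      have hj2 : C.n - 1 - i = 2*j + 1 := by omega
      have hjq : j < C.q := by omega
      rw [C.deg_odd j (by omega) v (by omega)]
      have : C.be j = C.d (C.n - 2 - 2*j) := by simp only [be, if_pos hjq]
      rw [this]
      congr 1
      omega


lemma p_le (v : ℕ) (hv : v < C.n) : C.p v ≤ v := by
  rcases Nat.eq_zero_or_pos v with h0 | h0
  · subst h0; rw [C.p_zero]
  · exact le_of_lt (C.p_lt v h0 hv)

noncomputable def G : SimpleGraph (Fin C.n) := PGr.PG C.n C.p

def pf : Fin C.n → Fin C.n := fun v => ⟨C.p v.val, lt_of_le_of_lt (C.p_le v.val v.isLt) v.isLt⟩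

lemma hn0 : 0 < C.n := by have := C.hn5; omega

lemma G_istree : C.G.IsTree := PGr.pg_istree C.p C.p_lt C.p_zero C.hn0

noncomputable def sPerm : Equiv.Perm (Fin C.n) := by
  apply Equiv.ofBijective (fun i : Fin C.n => (⟨C.sN i.val, C.sN_lt i.val i.isLt⟩ : Fin C.n))
  rw [Fintype.bijective_iff_injective_and_card]
  refine ⟨?_, rfl⟩
  intro i1 i2 hi
  have : C.sN i1.val = C.sN i2.val := congrArg Fin.val hi
  exact Fin.ext (C.sN_inj i1.val i1.isLt i2.val i2.isLt this)

lemma G_hasDegSeq : HasDegSeq C.d C.G := by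
  refine ⟨C.sPerm, fun i => ?_⟩
  exact C.deg_sN i.val i.isLt _ rfl

noncomputable def M : Finset (Sym2 (Fin C.n)) :=
  ((Finset.univ : Finset (Fin C.n)).filter (fun v => v.val % 2 = 1)).image
    (fun v => s(v, C.pf v))

lemma pf_odd (v : Fin C.n) (h : v.val % 2 = 1) : (C.pf v).val = v.val - 1 := by
  simp only [pf, C.p_odd v.val h]

lemma M_matching : IsMatchingF C.G C.M := by
  classical
  constructor
  · intro e he
    simp only [M, Finset.mem_image, Finset.mem_filter, Finset.mem_univ, true_and] at he
    obtain ⟨v, hodd, rfl⟩ := he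
    rw [SimpleGraph.mem_edgeSet]
    have hpf := C.pf_odd v hodd
    constructor
    · intro hvv
      have := congrArg Fin.val hvv
      omega
    · left
      exact rfl
  · intro e he f hf hef x hx
    simp only [M, Finset.mem_image, Finset.mem_filter, Finset.mem_univ, true_and] at he hf
    obtain ⟨v, hvodd, rfl⟩ := he
    obtain ⟨w, hwodd, rfl⟩ := hf
    have hvw : v ≠ w := by rintro rfl; exact hef rfl
    have hvw' : v.val ≠ w.val := fun h => hvw (Fin.ext h)
    have hpfv := C.pf_odd v hvodd
    have hpfw := C.pf_odd w hwodd
    rw [Sym2.mem_iff, Sym2.mem_iff] at hx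
    obtain ⟨hx1, hx2⟩ := hx
    have e1 : x.val = v.val ∨ x.val = v.val - 1 := by
      rcases hx1 with h | h
      · left; exact congrArg Fin.val h
      · right; rw [congrArg Fin.val h]; exact hpfv
    have e2 : x.val = w.val ∨ x.val = w.val - 1 := by
      rcases hx2 with h | h
      · left; exact congrArg Fin.val h
      · right; rw [congrArg Fin.val h]; exact hpfw
    omega

lemma M_card : C.M.card = C.k := by
  classical
  have hinj : Set.InjOn (fun v => s(v, C.pf v))
      ((Finset.univ : Finset (Fin C.n)).filter (fun v => v.val % 2 = 1)) := by
    intro v hv w hw h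
    simp only [Finset.coe_filter, Set.mem_setOf_eq] at hv hw
    have hpfv := C.pf_odd v hv.2
    have hpfw := C.pf_odd w hw.2
    rw [Sym2.eq_iff] at h
    rcases h with ⟨h1, _⟩ | ⟨h1, h2⟩
    · exact h1
    · have e1 := congrArg Fin.val h1
      have e2 := congrArg Fin.val h2
      rw [hpfw] at e1
      rw [hpfv] at e2
      apply Fin.ext
      omega
  rw [M, Finset.card_image_of_injOn hinj]
  rw [PGr.card_filter_fin (fun u => u % 2 = 1)]
  have himg : ((Finset.range C.n).filter (fun u => u % 2 = 1))
      = (Finset.range C.k).image (fun j => 2*j+1) := by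
    ext u
    simp only [Finset.mem_filter, Finset.mem_range, Finset.mem_image]
    have h1 := C.hkr; have h2 := C.hr
    constructor
    · rintro ⟨hu, hodd⟩
      exact ⟨u/2, by omega, by omega⟩
    · rintro ⟨j, hj, rfl⟩
      omega
  rw [himg, Finset.card_image_of_injective _ (by intro a b h; simp only [] at h; omega : Function.Injective (fun j : ℕ => 2*j+1))]
  exact Finset.card_range C.k

lemma G_matchNum : matchNum C.G = C.n / 2 := by
  apply PGr.matchNum_eq_of C.G C.M C.M_matching
  rw [C.M_card]
  have h1 := C.hkr; have h2 := C.hr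
  omega

lemma main : ∃ G : SimpleGraph (Fin C.n), G.IsTree ∧ HasDegSeq C.d G ∧ matchNum G = C.n / 2 :=
  ⟨C.G, C.G_istree, C.G_hasDegSeq, C.G_matchNum⟩

end Ctx

theorem exists_tree_max_matching (n : ℕ) (d : ℕ → ℕ) (hn : 2 < n)
    (hsort : ∀ i j, i ≤ j → j < n → d i ≤ d j)
    (hpos : ∀ i < n, 1 ≤ d i)
    (hsum : ∑ i ∈ Finset.range n, d i = 2 * n - 2)
    (l : ℕ) (hl : l = ((Finset.range n).filter fun i => d i = 1).card)
    (hlt : l < (n + 1) / 2) :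
    ∃ G : SimpleGraph (Fin n), G.IsTree ∧ HasDegSeq d G ∧ matchNum G = n / 2 := by
  classical
  -- the ones in `d` form a prefix of length `l`
  have honeA : ∀ i < n, i < l → d i = 1 := by
    intro i hi hil
    by_contra hne
    have h2 : 2 ≤ d i := by have := hpos i hi; omega
    have hsub : ((Finset.range n).filter fun j => d j = 1) ⊆ Finset.range i := by
      intro j hj
      simp only [Finset.mem_filter, Finset.mem_range] at hj ⊢
      by_contra hji
      have : d i ≤ d j := hsort i j (by omega) hj.1
      omega
    have := Finset.card_le_card hsub
    rw [← hl, Finset.card_range] at this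
    omega
  have honeB : ∀ i < n, d i = 1 → i < l := by
    intro i hi h1
    have hsub : Finset.range (i+1) ⊆ ((Finset.range n).filter fun j => d j = 1) := by
      intro j hj
      simp only [Finset.mem_range] at hj
      simp only [Finset.mem_filter, Finset.mem_range]
      have hle : d j ≤ d i := hsort j i (by omega) hi
      have := hpos j (by omega)
      exact ⟨by omega, by omega⟩
    have := Finset.card_le_card hsub
    rw [← hl, Finset.card_range] at this
    omega
  have hone : ∀ i < n, (d i = 1 ↔ i < l) := fun i hi => ⟨honeB i hi, fun h => honeA i hi h⟩
  -- l ≥ 2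
  have hl2 : 2 ≤ l := by
    have hsplit := Finset.sum_filter_add_sum_filter_not (Finset.range n) (fun j => d j = 1) d
    have hones : ∑ j ∈ (Finset.range n).filter (fun j => d j = 1), d j = l := by
      rw [Finset.sum_congr rfl (fun j hj => (Finset.mem_filter.mp hj).2), Finset.sum_const,
        ← hl, smul_eq_mul, mul_one]
    have hcards : ((Finset.range n).filter (fun j => d j = 1)).card
        + ((Finset.range n).filter (fun j => ¬ d j = 1)).card = n := by
      rw [Finset.card_filter_add_card_filter_not, Finset.card_range]
    have hbound : ∀ j ∈ (Finset.range n).filter (fun j => ¬ d j = 1), 2 ≤ d j := by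
      intro j hj
      simp only [Finset.mem_filter, Finset.mem_range] at hj
      have := hpos j hj.1
      omega
    have hbig := Finset.card_nsmul_le_sum ((Finset.range n).filter (fun j => ¬ d j = 1)) d 2 hbound
    have hbig2 : ((Finset.range n).filter (fun j => ¬ d j = 1)).card * 2
        ≤ ∑ j ∈ (Finset.range n).filter (fun j => ¬ d j = 1), d j := by
      simpa [smul_eq_mul] using hbig
    omega
  have hn5 : 5 ≤ n := by omega
  let C : Ctx := ⟨n, d, l, n / 2, n % 2, by omega, by omega, hsort, hpos, hone, hsum, hl2,
    by omega, by omega⟩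
  exact C.main
end
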